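/- arXiv:1309.0751 — 15 statements merged into one kernel-verified Lean document; each statement's English description precedes it below -/
import Mathlib

section
/- Let n ≥ 2 and let B = (b_{i,j})_{0≤i,j≤n−1} be an n×n integer matrix with zero diagonal such that vertex 0 is mutable (b_{i,0} ≠ 0 implies b_{0,i} ≠ 0 for all i) and b_{0,i} ≤ 0 for all i (sink type at vertex 0). Then B satisfies the period-1 equations if and only if all of the following hold: (1) for each 1 ≤ i ≤ n−1, either b_{0,i} < 0 and b_{0,n−i} < 0, or b_{0,i} = 0 and b_{0,n−i} = 0; (2) b_{i,0} = −b_{0,n−i} for all 1 ≤ i ≤ n−1; (3) b_{i,j} = b_{0,j−i} whenever 0 < i < j ≤ n−1, and b_{i,j} = −b_{0,n−i+j} whenever 0 < j < i ≤ n−1. -/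
/-- `ε_{i,j} = b_{i,0} · |b_{0,j}|` if `b_{0,i} · b_{0,j} < 0`, and `0` otherwise. -/
def eps (b : ℕ → ℕ → ℤ) (i j : ℕ) : ℤ :=
  if b 0 i * b 0 j < 0 then b i 0 * |b 0 j| else 0

/-- The period-1 equations for an `n × n` B-matrix `b`: mutating the associated double
quiver at vertex 0 and relabeling `(0,1,…,n−1) → (n−1,0,…,n−2)` returns the original
double quiver. -/
def PeriodOneEqs (n : ℕ) (b : ℕ → ℕ → ℤ) : Prop :=
  (∀ i ≤ n - 2, b (n - 1) i = -b 0 (i + 1)) ∧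
  (∀ i ≤ n - 2, b i (n - 1) = -b (i + 1) 0) ∧
  (∀ i ≤ n - 2, ∀ j ≤ n - 2, b i j = b (i + 1) (j + 1) + eps b (i + 1) (j + 1))

/-- Theorem 4.6 of the paper: classification of period 1 sink-type double quivers. -/
theorem stmt1 (n : ℕ) (hn : 2 ≤ n) (b : ℕ → ℕ → ℤ)
    (hdiag : ∀ i < n, b i i = 0)
    (hmut : ∀ i < n, b i 0 ≠ 0 → b 0 i ≠ 0)
    (hsink : ∀ i < n, b 0 i ≤ 0) :
    PeriodOneEqs n b ↔
      ((∀ i, 1 ≤ i → i ≤ n - 1 →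
          ((b 0 i < 0 ∧ b 0 (n - i) < 0) ∨ (b 0 i = 0 ∧ b 0 (n - i) = 0))) ∧
       (∀ i, 1 ≤ i → i ≤ n - 1 → b i 0 = -b 0 (n - i)) ∧
       (∀ i j, 0 < i → i < j → j ≤ n - 1 → b i j = b 0 (j - i)) ∧
       (∀ i j, 0 < j → j < i → i ≤ n - 1 → b i j = -b 0 (n - i + j))) := by
  have hepz : ∀ i < n, ∀ j < n, eps b i j = 0 := by
    intro i hi j hj
    unfold eps
    rw [if_neg]
    push_neg
    have h1 := hsink i hi
    have h2 := hsink j hj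
    nlinarith [mul_nonneg (neg_nonneg.mpr h1) (neg_nonneg.mpr h2)]
  constructor
  · rintro ⟨hA, hB, hC⟩
    have hC' : ∀ i ≤ n - 2, ∀ j ≤ n - 2, b i j = b (i + 1) (j + 1) := by
      intro i hi j hj
      rw [hC i hi j hj, hepz (i + 1) (by omega) (j + 1) (by omega), add_zero]
    have shift : ∀ k i j, i + k ≤ n - 1 → j + k ≤ n - 1 → b i j = b (i + k) (j + k) := by
      intro k
      induction k with
      | zero => intro i j _ _; rfl
      | succ m ih =>
        intro i j hi hj
        have h1 := ih i j (by omega) (by omega)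
        have h2 := hC' (i + m) (by omega) (j + m) (by omega)
        calc b i j = b (i + m) (j + m) := h1
          _ = b (i + m + 1) (j + m + 1) := h2
          _ = b (i + (m + 1)) (j + (m + 1)) := rfl
    have key2 : ∀ i, 1 ≤ i → i ≤ n - 1 → b i 0 = -b 0 (n - i) := by
      intro i h1 h2
      have hs := shift (n - 1 - i) i 0 (by omega) (by omega)
      have e1 : i + (n - 1 - i) = n - 1 := by omega
      have e2 : 0 + (n - 1 - i) = n - 1 - i := by omega
      rw [e1, e2] at hs
      rw [hs, hA (n - 1 - i) (by omega)]
      have : n - 1 - i + 1 = n - i := by omega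
      rw [this]
    refine ⟨?_, key2, ?_, ?_⟩
    · intro i h1 h2
      have hbi := hsink i (by omega)
      have hbni := hsink (n - i) (by omega)
      have m1 := hmut i (by omega)
      have m2 := hmut (n - i) (by omega)
      rw [key2 i h1 h2] at m1
      rw [key2 (n - i) (by omega) (by omega)] at m2
      have e : n - (n - i) = i := by omega
      rw [e] at m2
      rcases eq_or_lt_of_le hbi with h | h
      · right
        refine ⟨h, ?_⟩
        by_contra hne
        exact absurd h (m1 (neg_ne_zero.mpr hne))
      · left
        refine ⟨h, ?_⟩
        exact lt_of_le_of_ne hbni (m2 (neg_ne_zero.mpr h.ne))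
    · intro i j hi hij hj
      have hs := shift i 0 (j - i) (by omega) (by omega)
      have e1 : 0 + i = i := by omega
      have e2 : j - i + i = j := by omega
      rw [e1, e2] at hs
      exact hs.symm
    · intro i j hj hji hi
      have hs := shift (n - 1 - i) i j (by omega) (by omega)
      have e1 : i + (n - 1 - i) = n - 1 := by omega
      rw [e1] at hs
      rw [hs, hA (j + (n - 1 - i)) (by omega)]
      have : j + (n - 1 - i) + 1 = n - i + j := by omega
      rw [this]
  · rintro ⟨h1, h2, h3a, h3b⟩
    refine ⟨?_, ?_, ?_⟩
    · intro i hi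
      rcases Nat.eq_zero_or_pos i with h0 | h0
      · subst h0
        rw [h2 (n - 1) (by omega) le_rfl]
        have : n - (n - 1) = 0 + 1 := by omega
        rw [this]
      · rw [h3b (n - 1) i h0 (by omega) le_rfl]
        have : n - (n - 1) + i = i + 1 := by omega
        rw [this]
    · intro i hi
      rcases Nat.eq_zero_or_pos i with h0 | h0
      · subst h0
        show b 0 (n - 1) = -b 1 0
        rw [h2 1 le_rfl (by omega), neg_neg]
      · rw [h3a i (n - 1) h0 (by omega) le_rfl, h2 (i + 1) (by omega) (by omega), neg_neg]
        have : n - (i + 1) = n - 1 - i := by omega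
        rw [this]
    · intro i hi j hj
      rw [hepz (i + 1) (by omega) (j + 1) (by omega), add_zero]
      rcases lt_trichotomy i j with h | h | h
      · rcases Nat.eq_zero_or_pos i with h0 | h0
        · subst h0
          show b 0 j = b 1 (j + 1)
          rw [h3a 1 (j + 1) Nat.one_pos (by omega) (by omega)]
          have : j + 1 - 1 = j := by omega
          rw [this]
        · rw [h3a i j h0 h (by omega), h3a (i + 1) (j + 1) (by omega) (by omega) (by omega)]
          have : j + 1 - (i + 1) = j - i := by omega
          rw [this]
      · subst h
        rw [hdiag i (by omega), hdiag (i + 1) (by omega)]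
      · rcases Nat.eq_zero_or_pos j with h0 | h0
        · subst h0
          show b i 0 = b (i + 1) 1
          rw [h2 i (by omega) (by omega), h3b (i + 1) 1 Nat.one_pos (by omega) (by omega)]
          have : n - (i + 1) + 1 = n - i := by omega
          rw [this]
        · rw [h3b i j h0 h (by omega), h3b (i + 1) (j + 1) (by omega) (by omega) (by omega)]
          have : n - (i + 1) + (j + 1) = n - i + j := by omega
          rw [this]
end

section
/- Let n ≥ 2 and let B = (b_{i,j})_{0≤i,j≤n−1} be an n×n integer matrix with zero diagonal such that vertex 0 is mutable (b_{i,0} ≠ 0 implies b_{0,i} ≠ 0 for all i) and B is mutual at vertex 0 (b_{0,i}·b_{i,0} ≤ 0 for all i). Then B satisfies the period-1 equations if and only if all of the following hold: (1) for each 1 ≤ i ≤ n−1, either b_{0,i}·b_{i,0} < 0, or b_{0,i} = 0 and b_{i,0} = 0; (2) b_{i,0} = −b_{0,n−i} for all 1 ≤ i ≤ n−1; (3) b_{i,j} = −(∑_{k=0}^{i} ε_{i−k,j−k}) + b_{0,j−i} whenever 0 < i < j ≤ n−1; (4) b_{i,j} = −(∑_{k=0}^{j} ε_{i−k,j−k})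 − b_{0,n−i+j} whenever 0 < j < i ≤ n−1. -/
lemma eps_left (b : ℕ → ℕ → ℤ) (h00 : b 0 0 = 0) (j : ℕ) : eps b 0 j = 0 := by
  simp [eps, h00]
lemma eps_right (b : ℕ → ℕ → ℤ) (h00 : b 0 0 = 0) (i : ℕ) : eps b i 0 = 0 := by
  simp [eps, h00]
lemma absid (x y : ℤ) (h : x * y ≤ 0) : x * |y| + y * |x| = 0 := by
  rcases abs_cases x with ⟨hx, hx'⟩ | ⟨hx, hx'⟩ <;>
    rcases abs_cases y with ⟨hy, hy'⟩ | ⟨hy, hy'⟩ <;> rw [hx, hy] <;> nlinarith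
lemma keyS (cm rm cl rl : ℤ) (h1 : cm * rm ≤ 0) (h2 : cl * rl ≤ 0)
    (h3 : rm ≠ 0 → cm ≠ 0) (h4 : rl ≠ 0 → cl ≠ 0) :
    (if 0 < cm * rl then rm * |rl| else 0) + (if 0 < cl * rm then rl * |rm| else 0) = 0 := by
  split_ifs with p q q
  · have hrm : rm ≠ 0 := fun h => by simp [h] at q
    have hcm : cm ≠ 0 := fun h => by simp [h] at p
    have hcmrm : cm * rm < 0 := lt_of_le_of_ne h1 (mul_ne_zero hcm hrm)
    have hxy : rm * rl < 0 := by nlinarith [mul_neg_of_neg_of_pos hcmrm p, sq_nonneg cm]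
    exact absid rm rl hxy.le
  · rcases eq_or_ne rm 0 with h | h
    · simp [h]
    · exfalso
      have hcm := h3 h
      have hcmrm : cm * rm < 0 := lt_of_le_of_ne h1 (mul_ne_zero hcm h)
      have hrl : rl ≠ 0 := fun hh => by simp [hh] at p
      have hcl := h4 hrl
      have hclrl : cl * rl < 0 := lt_of_le_of_ne h2 (mul_ne_zero hcl hrl)
      exact q (by nlinarith [mul_pos_of_neg_of_neg hcmrm hclrl])
  · rcases eq_or_ne rl 0 with h | h
    · simp [h]
    · exfalso
      have hcl := h4 h
      have hclrl : cl * rl < 0 := lt_of_le_of_ne h2 (mul_ne_zero hcl h)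
      have hrm : rm ≠ 0 := fun hh => by simp [hh] at q
      have hcm := h3 hrm
      have hcmrm : cm * rm < 0 := lt_of_le_of_ne h1 (mul_ne_zero hcm hrm)
      exact p (by nlinarith [mul_pos_of_neg_of_neg hcmrm hclrl])
  · simp
lemma keyT (cm rm cl rl : ℤ) (h1 : cm * rm ≤ 0) (h2 : cl * rl ≤ 0)
    (hmc : rm ≠ 0 → cm ≠ 0) (hlc : rl ≠ 0 → cl ≠ 0)
    (hcm : cm ≠ 0 → rm ≠ 0) (hcl : cl ≠ 0 → rl ≠ 0) :
    (if 0 < rl * cm then -(cl * |cm|) else 0) + (if 0 < rm * cl then -(cm * |cl|) else 0) = 0 := by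
  split_ifs with p q q
  · have hrl : rl ≠ 0 := fun h => by simp [h] at p
    have hcl' := hlc hrl
    have hclrl : cl * rl < 0 := lt_of_le_of_ne h2 (mul_ne_zero hcl' hrl)
    have hcmcl : cm * cl < 0 := by nlinarith [mul_neg_of_pos_of_neg p hclrl, sq_nonneg rl]
    have h0 : cl * cm ≤ 0 := by nlinarith
    have := absid cl cm h0
    linarith
  · exfalso
    have hrl : rl ≠ 0 := fun h => by simp [h] at p
    have hcl' := hlc hrl
    have hclrl : cl * rl < 0 := lt_of_le_of_ne h2 (mul_ne_zero hcl' hrl)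
    have hcm' : cm ≠ 0 := fun h => by simp [h] at p
    have hrm := hcm hcm'
    have hcmrm : cm * rm < 0 := lt_of_le_of_ne h1 (mul_ne_zero hcm' hrm)
    exact q (by nlinarith [mul_pos_of_neg_of_neg hcmrm hclrl])
  · exfalso
    have hrm : rm ≠ 0 := fun h => by simp [h] at q
    have hcm' := hmc hrm
    have hcmrm : cm * rm < 0 := lt_of_le_of_ne h1 (mul_ne_zero hcm' hrm)
    have hcl'' : cl ≠ 0 := fun h => by simp [h] at q
    have hrl := hcl hcl''
    have hclrl : cl * rl < 0 := lt_of_le_of_ne h2 (mul_ne_zero hcl'' hrl)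
    exact p (by nlinarith [mul_pos_of_neg_of_neg hcmrm hclrl])
  · simp

lemma sumS (n : ℕ) (b : ℕ → ℕ → ℤ) (h00 : b 0 0 = 0)
    (hmut : ∀ k, 0 < k → k < n → (b k 0 ≠ 0 → b 0 k ≠ 0))
    (hmutual : ∀ k, 0 < k → k < n → b 0 k * b k 0 ≤ 0)
    (i : ℕ) (hi : i + 2 ≤ n)
    (hrel : ∀ k, 1 ≤ k → k ≤ i → b k 0 = -b 0 (n - k)) :
    ∑ k ∈ Finset.range (i + 1), eps b (i - k) (n - 1 - k) = 0 := by
  rw [Finset.sum_range_succ, Nat.sub_self, eps_left b h00, add_zero]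
  set F : ℕ → ℤ := fun k => eps b (i - k) (n - 1 - k) with hF
  have pair : ∀ k ∈ Finset.range i, F k + F (i - 1 - k) = 0 := by
    intro k hk
    rw [Finset.mem_range] at hk
    have e1 : i - (i - 1 - k) = k + 1 := by omega
    have e2 : n - 1 - (i - 1 - k) = n - (i - k) := by omega
    have e3 : n - 1 - k = n - (k + 1) := by omega
    simp only [hF, e1, e2, e3]
    have r1 : b 0 (n - (k + 1)) = -(b (k + 1) 0) := by
      rw [hrel (k + 1) (by omega) (by omega)]; ring
    have r2 : b 0 (n - (i - k)) = -(b (i - k) 0) := by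
      rw [hrel (i - k) (by omega) (by omega)]; ring
    simp only [eps, r1, r2, mul_neg, neg_mul, neg_lt_zero, abs_neg]
    exact keyS (b 0 (i - k)) (b (i - k) 0) (b 0 (k + 1)) (b (k + 1) 0)
      (hmutual _ (by omega) (by omega)) (hmutual _ (by omega) (by omega))
      (hmut _ (by omega) (by omega)) (hmut _ (by omega) (by omega))
  have hrefl := Finset.sum_range_reflect F i
  have h2 : (∑ k ∈ Finset.range i, F k) + (∑ k ∈ Finset.range i, F k) = 0 := by
    nth_rewrite 1 [← hrefl]
    rw [← Finset.sum_add_distrib]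
    apply Finset.sum_eq_zero
    intro k hk
    have := pair k hk
    linarith
  linarith

lemma sumT (n : ℕ) (b : ℕ → ℕ → ℤ) (h00 : b 0 0 = 0)
    (hmut : ∀ k, 0 < k → k < n → (b k 0 ≠ 0 → b 0 k ≠ 0))
    (hmutual : ∀ k, 0 < k → k < n → b 0 k * b k 0 ≤ 0)
    (hone : ∀ k, 0 < k → k < n → (b 0 k ≠ 0 → b k 0 ≠ 0))
    (i : ℕ) (hi : i + 2 ≤ n)
    (hrel : ∀ k, 1 ≤ k → k ≤ n - 1 → b k 0 = -b 0 (n - k)) :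
    ∑ k ∈ Finset.range (i + 1), eps b (n - 1 - k) (i - k) = 0 := by
  rw [Finset.sum_range_succ, Nat.sub_self, eps_right b h00, add_zero]
  set F : ℕ → ℤ := fun k => eps b (n - 1 - k) (i - k) with hF
  have pair : ∀ k ∈ Finset.range i, F k + F (i - 1 - k) = 0 := by
    intro k hk
    rw [Finset.mem_range] at hk
    have e1 : i - (i - 1 - k) = k + 1 := by omega
    have e2 : n - 1 - (i - 1 - k) = n - (i - k) := by omega
    have e3 : n - 1 - k = n - (k + 1) := by omega
    simp only [hF, e1, e2, e3]
    have r1 : b 0 (n - (k + 1)) = -(b (k + 1) 0) := by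
      rw [hrel (k + 1) (by omega) (by omega)]; ring
    have r2 : b 0 (n - (i - k)) = -(b (i - k) 0) := by
      rw [hrel (i - k) (by omega) (by omega)]; ring
    have r3 : b (n - (k + 1)) 0 = -(b 0 (k + 1)) := by
      rw [hrel (n - (k + 1)) (by omega) (by omega), show n - (n - (k + 1)) = k + 1 from by omega]
    have r4 : b (n - (i - k)) 0 = -(b 0 (i - k)) := by
      rw [hrel (n - (i - k)) (by omega) (by omega), show n - (n - (i - k)) = i - k from by omega]
    simp only [eps, r1, r2, r3, r4, mul_neg, neg_mul, neg_lt_zero, abs_neg]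
    exact keyT (b 0 (i - k)) (b (i - k) 0) (b 0 (k + 1)) (b (k + 1) 0)
      (hmutual _ (by omega) (by omega)) (hmutual _ (by omega) (by omega))
      (hmut _ (by omega) (by omega)) (hmut _ (by omega) (by omega))
      (hone _ (by omega) (by omega)) (hone _ (by omega) (by omega))
  have hrefl := Finset.sum_range_reflect F i
  have h2 : (∑ k ∈ Finset.range i, F k) + (∑ k ∈ Finset.range i, F k) = 0 := by
    nth_rewrite 1 [← hrefl]
    rw [← Finset.sum_add_distrib]
    apply Finset.sum_eq_zero
    intro k hk
    have := pair k hk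
    linarith
  linarith
lemma tele3 (n : ℕ) (b : ℕ → ℕ → ℤ) (h00 : b 0 0 = 0)
    (hC : ∀ i ≤ n - 2, ∀ j ≤ n - 2, b i j = b (i + 1) (j + 1) + eps b (i + 1) (j + 1)) :
    ∀ i j, i ≤ j → j ≤ n - 1 →
      b i j = -(∑ k ∈ Finset.range (i + 1), eps b (i - k) (j - k)) + b 0 (j - i) := by
  intro i
  induction i with
  | zero => intro j _ _; simp [eps_left b h00]
  | succ i ih =>
    intro j hij hj
    have hj1 : 1 ≤ j := by omega
    have hC' := hC i (by omega) (j - 1) (by omega)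
    rw [show j - 1 + 1 = j from by omega] at hC'
    have ihj := ih (j - 1) (by omega) (by omega)
    have hsum : ∑ k ∈ Finset.range (i + 1 + 1), eps b (i + 1 - k) (j - k)
        = (∑ k ∈ Finset.range (i + 1), eps b (i - k) (j - 1 - k)) + eps b (i + 1) j := by
      rw [Finset.sum_range_succ']
      congr 1
      apply Finset.sum_congr rfl
      intro k _
      congr 1 <;> omega
    rw [hsum, show j - (i + 1) = j - 1 - i from by omega]
    linarith

lemma tele4 (n : ℕ) (b : ℕ → ℕ → ℤ) (h00 : b 0 0 = 0)
    (hC : ∀ i ≤ n - 2, ∀ j ≤ n - 2, b i j = b (i + 1) (j + 1) + eps b (i + 1) (j + 1)) :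
    ∀ j i, j ≤ i → i ≤ n - 1 →
      b i j = -(∑ k ∈ Finset.range (j + 1), eps b (i - k) (j - k)) + b (i - j) 0 := by
  intro j
  induction j with
  | zero => intro i _ _; simp [eps_right b h00]
  | succ j ih =>
    intro i hji hi
    have hi1 : 1 ≤ i := by omega
    have hC' := hC (i - 1) (by omega) j (by omega)
    rw [show i - 1 + 1 = i from by omega] at hC'
    have ihi := ih (i - 1) (by omega) (by omega)
    have hsum : ∑ k ∈ Finset.range (j + 1 + 1), eps b (i - k) (j + 1 - k)
        = (∑ k ∈ Finset.range (j + 1), eps b (i - 1 - k) (j - k)) + eps b i (j + 1) := by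
      rw [Finset.sum_range_succ']
      congr 1
      apply Finset.sum_congr rfl
      intro k _
      congr 1 <;> omega
    rw [hsum, show i - (j + 1) = i - 1 - j from by omega]
    linarith


/-- Theorem 4.10 of the paper: classification of period 1 mutual double quivers. -/
theorem stmt2 (n : ℕ) (hn : 2 ≤ n) (b : ℕ → ℕ → ℤ)
    (hdiag : ∀ i < n, b i i = 0)
    (hmut : ∀ i < n, b i 0 ≠ 0 → b 0 i ≠ 0)
    (hmutual : ∀ i < n, b 0 i * b i 0 ≤ 0) :
    PeriodOneEqs n b ↔
      ((∀ i, 1 ≤ i → i ≤ n - 1 →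
          (b 0 i * b i 0 < 0 ∨ (b 0 i = 0 ∧ b i 0 = 0))) ∧
       (∀ i, 1 ≤ i → i ≤ n - 1 → b i 0 = -b 0 (n - i)) ∧
       (∀ i j, 0 < i → i < j → j ≤ n - 1 →
          b i j = -(∑ k ∈ Finset.range (i + 1), eps b (i - k) (j - k)) + b 0 (j - i)) ∧
       (∀ i j, 0 < j → j < i → i ≤ n - 1 →
          b i j = -(∑ k ∈ Finset.range (j + 1), eps b (i - k) (j - k)) - b 0 (n - i + j))) := by
  have h00 : b 0 0 = 0 := hdiag 0 (by omega)
  have hmut' : ∀ k, 0 < k → k < n → (b k 0 ≠ 0 → b 0 k ≠ 0) := fun k _ hk => hmut k hk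
  have hmutual' : ∀ k, 0 < k → k < n → b 0 k * b k 0 ≤ 0 := fun k _ hk => hmutual k hk
  constructor
  · rintro ⟨hA, hB, hC⟩
    have Hrel' : ∀ i, i ≤ n - 1 → ∀ m, 1 ≤ m → m ≤ i → b m 0 = -b 0 (n - m) := by
      intro i
      induction i with
      | zero => intro _ m h1 h2; exact absurd h2 (by omega)
      | succ i ih =>
        intro hi m h1 h2
        rcases Nat.lt_or_ge m (i + 1) with h | h
        · exact ih (by omega) m h1 (by omega)
        · have hm : m = i + 1 := by omega
          subst hm
          rcases Nat.eq_zero_or_pos i with h0 | h0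
          · subst h0
            have hb0 : b 0 (n - 1) = -b 1 0 := hB 0 (by omega)
            show b 1 0 = -b 0 (n - 1)
            linarith
          · have hBi := hB i (by omega)
            have ht := tele3 n b h00 hC i (n - 1) (by omega) (by omega)
            have hs := sumS n b h00 hmut' hmutual' i (by omega)
              (fun k hk1 hk2 => ih (by omega) k hk1 hk2)
            rw [hs] at ht
            rw [show n - (i + 1) = n - 1 - i from by omega]
            linarith
    have Hrel : ∀ k, 1 ≤ k → k ≤ n - 1 → b k 0 = -b 0 (n - k) :=
      fun k hk1 hk2 => Hrel' (n - 1) le_rfl k hk1 hk2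
    refine ⟨?_, Hrel, ?_, ?_⟩
    · intro i h1 h2
      rcases eq_or_ne (b 0 i) 0 with hc | hc
      · right
        refine ⟨hc, ?_⟩
        by_contra hr
        exact hmut i (by omega) hr hc
      · left
        have h3 : b (n - i) 0 = -b 0 i := by
          rw [Hrel (n - i) (by omega) (by omega), show n - (n - i) = i from by omega]
        have h4 : b (n - i) 0 ≠ 0 := by rw [h3]; exact neg_ne_zero.mpr hc
        have h5 : b 0 (n - i) ≠ 0 := hmut (n - i) (by omega) h4
        have h6 : b i 0 ≠ 0 := by
          rw [Hrel i h1 h2]; exact neg_ne_zero.mpr h5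
        exact lt_of_le_of_ne (hmutual i (by omega)) (mul_ne_zero hc h6)
    · intro i j hi hij hj
      exact tele3 n b h00 hC i j hij.le hj
    · intro i j hj hji hi
      have t := tele4 n b h00 hC j i hji.le hi
      have hr := Hrel (i - j) (by omega) (by omega)
      rw [show n - (i - j) = n - i + j from by omega] at hr
      rw [t, hr]; ring
  · rintro ⟨h1, h2, h3, h4⟩
    have hone : ∀ k, 0 < k → k < n → (b 0 k ≠ 0 → b k 0 ≠ 0) := by
      intro k hk hkn hc
      rcases h1 k hk (by omega) with h | h
      · intro hr; rw [hr, mul_zero] at h; exact lt_irrefl 0 h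
      · exact absurd h.1 hc
    refine ⟨?_, ?_, ?_⟩
    · intro i hi
      rcases Nat.eq_zero_or_pos i with h0 | h0
      · subst h0
        show b (n - 1) 0 = -b 0 1
        rw [h2 (n - 1) (by omega) le_rfl, show n - (n - 1) = 1 from by omega]
      · have hT := sumT n b h00 hmut' hmutual' hone i (by omega) h2
        have h4' := h4 (n - 1) i h0 (by omega) le_rfl
        rw [hT, show n - (n - 1) + i = i + 1 from by omega] at h4'
        rw [h4']; ring
    · intro i hi
      rcases Nat.eq_zero_or_pos i with h0 | h0
      · subst h0
        show b 0 (n - 1) = -b 1 0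
        rw [h2 1 le_rfl (by omega)]; ring
      · have hS := sumS n b h00 hmut' hmutual' i (by omega)
          (fun k hk1 hk2 => h2 k hk1 (by omega))
        have h3' := h3 i (n - 1) h0 (by omega) le_rfl
        rw [hS] at h3'
        rw [h3', h2 (i + 1) (by omega) (by omega),
          show n - (i + 1) = n - 1 - i from by omega]
        ring
    · intro i hi j hj
      rcases Nat.lt_trichotomy i j with hij | hij | hij
      · rcases Nat.eq_zero_or_pos i with h0 | h0
        · subst h0
          have h3' := h3 1 (j + 1) (by omega) (by omega) (by omega)
          simp only [Finset.sum_range_succ, Finset.sum_range_one, Nat.sub_zero,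
            show (1 : ℕ) - 1 = 0 from rfl, show j + 1 - 1 = j from by omega] at h3'
          rw [eps_left b h00] at h3'
          show b 0 j = b 1 (j + 1) + eps b 1 (j + 1)
          rw [h3']; ring
        · have ha := h3 i j h0 hij (by omega)
          have hb' := h3 (i + 1) (j + 1) (by omega) (by omega) (by omega)
          have hsum : ∑ k ∈ Finset.range (i + 1 + 1), eps b (i + 1 - k) (j + 1 - k)
              = (∑ k ∈ Finset.range (i + 1), eps b (i - k) (j - k)) + eps b (i + 1) (j + 1) := by
            rw [Finset.sum_range_succ']
            congr 1
            apply Finset.sum_congr rfl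
            intro k _
            congr 1 <;> omega
          rw [hsum, show j + 1 - (i + 1) = j - i from by omega] at hb'
          rw [ha, hb']; ring
      · subst hij
        rw [hdiag i (by omega), hdiag (i + 1) (by omega)]
        have he : eps b (i + 1) (i + 1) = 0 := by
          simp only [eps]
          rw [if_neg (not_lt.mpr (mul_self_nonneg _))]
        rw [he]; ring
      · rcases Nat.eq_zero_or_pos j with h0 | h0
        · subst h0
          have h4' := h4 (i + 1) 1 (by omega) (by omega) (by omega)
          simp only [Finset.sum_range_succ, Finset.sum_range_one, Nat.sub_zero,
            show (1 : ℕ) - 1 = 0 from rfl, show i + 1 - 1 = i from by omega] at h4'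
          rw [eps_right b h00, show n - (i + 1) + 1 = n - i from by omega] at h4'
          show b i 0 = b (i + 1) 1 + eps b (i + 1) 1
          rw [h2 i (by omega) (by omega), h4']; ring
        · have ha := h4 i j h0 hij (by omega)
          have hb' := h4 (i + 1) (j + 1) (by omega) (by omega) (by omega)
          have hsum : ∑ k ∈ Finset.range (j + 1 + 1), eps b (i + 1 - k) (j + 1 - k)
              = (∑ k ∈ Finset.range (j + 1), eps b (i - k) (j - k)) + eps b (i + 1) (j + 1) := by
            rw [Finset.sum_range_succ']
            congr 1
            apply Finset.sum_congr rfl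
            intro k _
            congr 1 <;> omega
          rw [hsum, show n - (i + 1) + (j + 1) = n - i + j from by omega] at hb'
          rw [ha, hb']; ring
end

section
/- Let n ≥ 2 and let B = (b_{i,j})_{0≤i,j≤n−1} be an n×n integer matrix with zero diagonal such that vertex 0 is mutable (b_{i,0} ≠ 0 implies b_{0,i} ≠ 0 for all i), B is mutual at vertex 0 (b_{0,i}·b_{i,0} ≤ 0 for all i), and B satisfies the period-1 equations. Then for every 1 ≤ i ≤ n−1 one has b_{0,i} = −b_{n−i,0} and b_{i,0} = −b_{0,n−i}. -/

lemma cond_symm (x x' y y' : ℤ) (hx : x * x' ≤ 0) (hy : y * y' ≤ 0)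
    (hx0 : x = 0 ↔ x' = 0) (hy0 : y = 0 ↔ y' = 0) (h1 : 0 < x * y') : 0 < y * x' := by
  have hxne : x ≠ 0 := by rintro rfl; simp at h1
  have hy'ne : y' ≠ 0 := by rintro rfl; simp at h1
  have hx'ne : x' ≠ 0 := fun h => hxne (hx0.mpr h)
  have hyne : y ≠ 0 := fun h => hy'ne (hy0.mp h)
  have hx2 : x * x' < 0 := lt_of_le_of_ne hx (mul_ne_zero hxne hx'ne)
  have hy2 : y * y' < 0 := lt_of_le_of_ne hy (mul_ne_zero hyne hy'ne)
  nlinarith [mul_pos h1 (mul_pos_of_neg_of_neg hx2 hy2), sq_nonneg (x * y')]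

lemma pair1 (x x' y y' : ℤ) (hx : x * x' ≤ 0) (hy : y * y' ≤ 0)
    (hx0 : x = 0 ↔ x' = 0) (hy0 : y = 0 ↔ y' = 0) :
    (if x * -y' < 0 then x' * |(-y')| else 0) + (if y * -x' < 0 then y' * |(-x')| else 0) = 0 := by
  simp only [abs_neg, mul_neg, neg_lt_zero]
  by_cases h1 : 0 < x * y'
  · have h2 : 0 < y * x' := cond_symm x x' y y' hx hy hx0 hy0 h1
    rw [if_pos h1, if_pos h2]
    have hxne : x ≠ 0 := by rintro rfl; simp at h1
    have hy'ne : y' ≠ 0 := by rintro rfl; simp at h1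
    have hx'ne : x' ≠ 0 := fun h => hxne (hx0.mpr h)
    have hx2 : x * x' < 0 := lt_of_le_of_ne hx (mul_ne_zero hxne hx'ne)
    rcases lt_trichotomy y' 0 with h3 | h3 | h3
    · have hxneg : x < 0 := by nlinarith
      have hx'pos : 0 < x' := by nlinarith
      rw [abs_of_neg h3, abs_of_pos hx'pos]; ring
    · exact absurd h3 hy'ne
    · have hxpos : 0 < x := by nlinarith
      have hx'neg : x' < 0 := by nlinarith
      rw [abs_of_pos h3, abs_of_neg hx'neg]; ring
  · have h2 : ¬ 0 < y * x' := fun h2 => h1 (cond_symm y y' x x' hy hx hy0 hx0 h2)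
    rw [if_neg h1, if_neg h2]; norm_num

lemma pair2 (x x' y y' : ℤ) (hx : x * x' ≤ 0) (hy : y * y' ≤ 0)
    (hx0 : x = 0 ↔ x' = 0) (hy0 : y = 0 ↔ y' = 0) :
    (if -y' * x < 0 then -y * |x| else 0) + (if -x' * y < 0 then -x * |y| else 0) = 0 := by
  simp only [neg_mul, neg_lt_zero, mul_comm y' x, mul_comm x' y]
  by_cases h1 : 0 < x * y'
  · have h2 : 0 < y * x' := cond_symm x x' y y' hx hy hx0 hy0 h1
    rw [if_pos h1, if_pos h2]
    have hxne : x ≠ 0 := by rintro rfl; simp at h1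
    have hy'ne : y' ≠ 0 := by rintro rfl; simp at h1
    have hx'ne : x' ≠ 0 := fun h => hxne (hx0.mpr h)
    have hyne : y ≠ 0 := fun h => hy'ne (hy0.mp h)
    have hy2 : y * y' < 0 := lt_of_le_of_ne hy (mul_ne_zero hyne hy'ne)
    rcases lt_trichotomy x 0 with h3 | h3 | h3
    · have hy'neg : y' < 0 := by nlinarith
      have hypos : 0 < y := by nlinarith
      rw [abs_of_neg h3, abs_of_pos hypos]; ring
    · exact absurd h3 hxne
    · have hy'pos : 0 < y' := by nlinarith
      have hyneg : y < 0 := by nlinarith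
      rw [abs_of_pos h3, abs_of_neg hyneg]; ring
  · have h2 : ¬ 0 < y * x' := fun h2 => h1 (cond_symm y y' x x' hy hx hy0 hx0 h2)
    rw [if_neg h1, if_neg h2]; norm_num

/-- The key intermediate identity (equation (ex3)) in the proof of the classification
of period 1 mutual double quivers: `b_{0,i} = −b_{n−i,0}` and `b_{i,0} = −b_{0,n−i}`. -/
theorem stmt3 (n : ℕ) (hn : 2 ≤ n) (b : ℕ → ℕ → ℤ)
    (hdiag : ∀ i < n, b i i = 0)
    (hmut : ∀ i < n, b i 0 ≠ 0 → b 0 i ≠ 0)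
    (hmutual : ∀ i < n, b 0 i * b i 0 ≤ 0)
    (hper : PeriodOneEqs n b) :
    ∀ i, 1 ≤ i → i ≤ n - 1 → b 0 i = -b (n - i) 0 ∧ b i 0 = -b 0 (n - i) := by
  obtain ⟨h1, h2, h3⟩ := hper
  suffices H : ∀ k, 1 ≤ k → k ≤ n - 1 → b 0 (n - k) = -b k 0 ∧ b (n - k) 0 = -b 0 k by
    intro i hi1 hi2
    obtain ⟨hA, hB⟩ := H (n - i) (by omega) (by omega)
    have hni : n - (n - i) = i := by omega
    rw [hni] at hA hB
    exact ⟨hA, hB⟩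
  intro k
  induction k using Nat.strong_induction_on with
  | _ k IH =>
    intro hk1 hk2
    rcases Nat.lt_or_ge k 2 with hk | hk
    · have hk1' : k = 1 := by omega
      subst hk1'
      refine ⟨?_, ?_⟩
      · have := h2 0 (by omega); simpa using this
      · have := h1 0 (by omega); simpa using this
    · set p := k - 1 with hp
      have hQ : ∀ u, 1 ≤ u → u ≤ p → b 0 (n - u) = -b u 0 ∧ b (n - u) 0 = -b 0 u :=
        fun u hu1 hu2 => IH u (by omega) (by omega) (by omega)
      have hzero : ∀ u, 1 ≤ u → u ≤ p → (b 0 u = 0 ↔ b u 0 = 0) := by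
        intro u hu1 hu2
        obtain ⟨q1, q2⟩ := hQ u hu1 hu2
        constructor
        · intro h
          by_contra h'
          exact hmut u (by omega) h' h
        · intro h
          by_contra h'
          have hb : b (n - u) 0 ≠ 0 := by rw [q2]; simpa using h'
          have hb2 := hmut (n - u) (by omega) hb
          rw [q1] at hb2
          exact hb2 (by rw [h, neg_zero])
      -- pairwise cancellation for the first sum
      have hpair1 : ∀ j < p, eps b (j + 1) (n - k + (j + 1)) +
          eps b (p - 1 - j + 1) (n - k + (p - 1 - j + 1)) = 0 := by
        intro j hj
        have es : p - 1 - j + 1 = k - (j + 1) := by omega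
        have e2 : n - k + (p - 1 - j + 1) = n - (j + 1) := by omega
        have e1 : n - k + (j + 1) = n - (k - (j + 1)) := by omega
        rw [e2, es, e1]
        set u := j + 1 with hu
        set s := k - u with hs
        have hu1 : 1 ≤ u := by omega
        have hu2 : u ≤ p := by omega
        have hs1 : 1 ≤ s := by omega
        have hs2 : s ≤ p := by omega
        obtain ⟨qu1, qu2⟩ := hQ u hu1 hu2
        obtain ⟨qs1, qs2⟩ := hQ s hs1 hs2
        unfold eps
        rw [qs1, qu1]
        exact pair1 (b 0 u) (b u 0) (b 0 s) (b s 0) (hmutual u (by omega)) (hmutual s (by omega))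
          (hzero u hu1 hu2) (hzero s hs1 hs2)
      have hpair2 : ∀ j < p, eps b (n - k + (j + 1)) (j + 1) +
          eps b (n - k + (p - 1 - j + 1)) (p - 1 - j + 1) = 0 := by
        intro j hj
        have es : p - 1 - j + 1 = k - (j + 1) := by omega
        have e2 : n - k + (p - 1 - j + 1) = n - (j + 1) := by omega
        have e1 : n - k + (j + 1) = n - (k - (j + 1)) := by omega
        rw [e2, es, e1]
        set u := j + 1 with hu
        set s := k - u with hs
        have hu1 : 1 ≤ u := by omega
        have hu2 : u ≤ p := by omega
        have hs1 : 1 ≤ s := by omega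
        have hs2 : s ≤ p := by omega
        obtain ⟨qu1, qu2⟩ := hQ u hu1 hu2
        obtain ⟨qs1, qs2⟩ := hQ s hs1 hs2
        unfold eps
        rw [qs1, qs2, qu1, qu2]
        exact pair2 (b 0 u) (b u 0) (b 0 s) (b s 0) (hmutual u (by omega)) (hmutual s (by omega))
          (hzero u hu1 hu2) (hzero s hs1 hs2)
      -- the two sums vanish
      have hS1 : ∑ j ∈ Finset.range p, eps b (j + 1) (n - k + (j + 1)) = 0 := by
        have hre := Finset.sum_range_reflect (fun j => eps b (j + 1) (n - k + (j + 1))) p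
        have hcg : ∑ j ∈ Finset.range p, eps b (p - 1 - j + 1) (n - k + (p - 1 - j + 1)) =
            ∑ j ∈ Finset.range p, -eps b (j + 1) (n - k + (j + 1)) := by
          refine Finset.sum_congr rfl fun j hj => ?_
          have := hpair1 j (Finset.mem_range.mp hj)
          linarith
        rw [hcg, Finset.sum_neg_distrib] at hre
        linarith
      have hS2 : ∑ j ∈ Finset.range p, eps b (n - k + (j + 1)) (j + 1) = 0 := by
        have hre := Finset.sum_range_reflect (fun j => eps b (n - k + (j + 1)) (j + 1)) p
        have hcg : ∑ j ∈ Finset.range p, eps b (n - k + (p - 1 - j + 1)) (p - 1 - j + 1) =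
            ∑ j ∈ Finset.range p, -eps b (n - k + (j + 1)) (j + 1) := by
          refine Finset.sum_congr rfl fun j hj => ?_
          have := hpair2 j (Finset.mem_range.mp hj)
          linarith
        rw [hcg, Finset.sum_neg_distrib] at hre
        linarith
      -- telescoping
      have tele1 : ∀ t ≤ p, b 0 (n - k) =
          b t (n - k + t) + ∑ j ∈ Finset.range t, eps b (j + 1) (n - k + (j + 1)) := by
        intro t
        induction t with
        | zero => intro _; simp
        | succ t ih =>
          intro ht
          have ih' := ih (by omega)
          have hstep := h3 t (by omega) (n - k + t) (by omega)
          have e : n - k + t + 1 = n - k + (t + 1) := rfl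
          rw [Finset.sum_range_succ, ← e]
          rw [ih', hstep]
          ring
      have tele2 : ∀ t ≤ p, b (n - k) 0 =
          b (n - k + t) t + ∑ j ∈ Finset.range t, eps b (n - k + (j + 1)) (j + 1) := by
        intro t
        induction t with
        | zero => intro _; simp
        | succ t ih =>
          intro ht
          have ih' := ih (by omega)
          have hstep := h3 (n - k + t) (by omega) t (by omega)
          have e : n - k + t + 1 = n - k + (t + 1) := rfl
          rw [Finset.sum_range_succ, ← e]
          rw [ih', hstep]
          ring
      have hT1 := tele1 p le_rfl
      have hT2 := tele2 p le_rfl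
      rw [hS1] at hT1
      rw [hS2] at hT2
      have ep : n - k + p = n - 1 := by omega
      rw [ep] at hT1 hT2
      have hb1 := h2 p (by omega)
      have hb2 := h1 p (by omega)
      have epk : p + 1 = k := by omega
      rw [epk] at hb1 hb2
      refine ⟨?_, ?_⟩
      · rw [hT1, hb1]; ring
      · rw [hT2, hb2]; ring
end

section
/- Fix n ≥ 2 and nonnegative integers a_1, …, a_{n−1} such that a_i = 0 if and only if a_{n−i} = 0, for all 1 ≤ i ≤ n−1. Suppose the polynomial P = x_1^{a_1}·x_2^{a_2}⋯x_{n−1}^{a_{n−1}} + 1 is irreducible in ℤ[x_1,…,x_{n−1}]. Then every term of any sequence x : ℕ → F generated by P is a Laurent polynomial. -/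
open MvPolynomial

set_option maxHeartbeats 4000000 in
set_option synthInstance.maxHeartbeats 4000000 in

/-- Sink-type binomial case (family (2) of Theorem 3.7 with Corollary 3.8):
if `P = x_1^{a_1}⋯x_{n-1}^{a_{n-1}} + 1` is irreducible and `a_i = 0 ↔ a_{n-i} = 0`,
then every term of any sequence generated by `P` is a Laurent polynomial in the
initial variables. -/
theorem stmt4 (n : ℕ) (hn : 2 ≤ n) (a : ℕ → ℕ)
    (ha : ∀ i ∈ Finset.Icc 1 (n - 1), (a i = 0 ↔ a (n - i) = 0))
    (P : MvPolynomial ℕ ℤ)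
    (hP : P = (∏ i ∈ Finset.Icc 1 (n - 1), X i ^ a i) + 1)
    (hirr : Irreducible P)
    (x : ℕ → FractionRing (MvPolynomial (Fin n) ℤ))
    (hinit : ∀ i : Fin n, x i =
      algebraMap (MvPolynomial (Fin n) ℤ) (FractionRing (MvPolynomial (Fin n) ℤ)) (X i))
    (hnz : ∀ m, x m ≠ 0)
    (hrec : ∀ m, x m * x (m + n) = aeval (fun i : ℕ => x (m + i)) P) :
    ∀ m, x m ∈ Subring.closure
      ((Set.range fun i : Fin n =>
          algebraMap (MvPolynomial (Fin n) ℤ) (FractionRing (MvPolynomial (Fin n) ℤ)) (X i)) ∪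
        (Set.range fun i : Fin n =>
          (algebraMap (MvPolynomial (Fin n) ℤ) (FractionRing (MvPolynomial (Fin n) ℤ)) (X i))⁻¹)) := by
  classical
  set S : Subring (FractionRing (MvPolynomial (Fin n) ℤ)) := Subring.closure
      ((Set.range fun i : Fin n =>
          algebraMap (MvPolynomial (Fin n) ℤ) (FractionRing (MvPolynomial (Fin n) ℤ)) (X i)) ∪
        (Set.range fun i : Fin n =>
          (algebraMap (MvPolynomial (Fin n) ℤ) (FractionRing (MvPolynomial (Fin n) ℤ)) (X i))⁻¹))
    with hSdef
  set T : Finset ℕ := Finset.Icc 1 (n - 1) with hT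
  -- The recurrence in explicit product form
  have hrec' : ∀ m, x m * x (m + n) = (∏ t ∈ T, x (m + t) ^ a t) + 1 := by
    intro m
    rw [hrec m, hP]
    simp only [map_add, map_one, map_prod, map_pow, aeval_X]
  -- initial variables and their inverses belong to S
  have hxmem : ∀ m, m < n → x m ∈ S := by
    intro m hm
    have h0 : x m = algebraMap (MvPolynomial (Fin n) ℤ)
        (FractionRing (MvPolynomial (Fin n) ℤ)) (X (⟨m, hm⟩ : Fin n)) := hinit ⟨m, hm⟩
    rw [h0]
    exact Subring.subset_closure (Set.mem_union_left _ ⟨⟨m, hm⟩, rfl⟩)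
  have hxinv : ∀ m, m < n → (x m)⁻¹ ∈ S := by
    intro m hm
    have h0 : x m = algebraMap (MvPolynomial (Fin n) ℤ)
        (FractionRing (MvPolynomial (Fin n) ℤ)) (X (⟨m, hm⟩ : Fin n)) := hinit ⟨m, hm⟩
    rw [h0]
    exact Subring.subset_closure (Set.mem_union_right _ ⟨⟨m, hm⟩, rfl⟩)
  -- an S-valued lift of the sequence
  let y : ℕ → S := fun i => if h : x i ∈ S then (⟨x i, h⟩ : S) else 0
  have hy : ∀ i, x i ∈ S → ((y i : FractionRing (MvPolynomial (Fin n) ℤ)) = x i) := by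
    intro i h
    simp only [y]
    rw [dif_pos h]
  intro m
  induction m using Nat.strong_induction_on with
  | _ k IH =>
    by_cases hk : k < n
    · exact hxmem k hk
    by_cases hk2 : k < 2 * n
    · -- case n ≤ k < 2n : division by a unit x (k-n)
      obtain ⟨i, rfl⟩ : ∃ i, k = i + n := ⟨k - n, by omega⟩
      have hi : i < n := by omega
      have hNmem : (∏ t ∈ T, x (i + t) ^ a t) + 1 ∈ S := by
        refine S.add_mem (Subring.prod_mem S fun t ht => Subring.pow_mem S (IH _ ?_) _)
          S.one_mem
        have := (Finset.mem_Icc.mp (hT ▸ ht)).2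
        omega
      have h2 : x (i + n) = (x i)⁻¹ * ((∏ t ∈ T, x (i + t) ^ a t) + 1) := by
        rw [← hrec' i, inv_mul_cancel_left₀ (hnz i)]
      rw [h2]
      exact S.mul_mem (hxinv i hi) hNmem
    · -- main case k = j + 2n
      obtain ⟨j, rfl⟩ : ∃ j, k = j + 2 * n := ⟨k - 2 * n, by omega⟩
      have hπS : x (j + n) ∈ S := IH _ (by omega)
      -- the recurrence, lifted to S
      have rel : ∀ i, i + n < j + 2 * n →
          y i * y (i + n) = (∏ t ∈ T, y (i + t) ^ a t) + 1 := by
        intro i hi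
        apply Subtype.ext
        have hmem : ∀ t ∈ T, x (i + t) ∈ S := by
          intro t ht
          refine IH _ ?_
          have := (Finset.mem_Icc.mp (hT ▸ ht)).2
          omega
        have hL : ((y i * y (i + n) : S) : FractionRing (MvPolynomial (Fin n) ℤ))
            = x i * x (i + n) := by
          push_cast
          rw [hy i (IH i (by omega)), hy (i + n) (IH _ hi)]
        have hR : (((∏ t ∈ T, y (i + t) ^ a t) + 1 : S) :
              FractionRing (MvPolynomial (Fin n) ℤ))
            = (∏ t ∈ T, x (i + t) ^ a t) + 1 := by
          push_cast
          exact congrArg (· + 1) (Finset.prod_congr rfl fun t ht => by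
            rw [hy _ (hmem t ht)])
        rw [hL, hR]
        exact hrec' i
      -- congruence arithmetic modulo π = y (j + n) inside the subring S
      have mulone : ∀ p q : S, y (j + n) ∣ p - 1 → y (j + n) ∣ q - 1 →
          y (j + n) ∣ p * q - 1 := by
        intro p q h1 h2
        have h3 : p * q - 1 = p * (q - 1) + (p - 1) := by ring
        rw [h3]
        exact dvd_add (h2.mul_left p) h1
      have powone : ∀ (w : S) (e : ℕ), y (j + n) ∣ w - 1 → y (j + n) ∣ w ^ e - 1 := by
        intro w e h
        have h2 := h.trans (sub_dvd_pow_sub_pow w 1 e)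
        rwa [one_pow] at h2
      have prodone : ∀ (s : Finset ℕ) (g : ℕ → S), (∀ t ∈ s, y (j + n) ∣ g t - 1) →
          y (j + n) ∣ (∏ t ∈ s, g t) - 1 := by
        intro s
        induction s using Finset.induction_on with
        | empty => intro g _; simp
        | insert _ _ hni ih =>
          intro g hg
          rw [Finset.prod_insert hni]
          exact mulone _ _ (hg _ (Finset.mem_insert_self _ _))
            (ih g fun t ht => hg t (Finset.mem_insert_of_mem ht))
      -- each paired product is ≡ 1 mod π
      have claim1 : ∀ t ∈ T, a t ≠ 0 →
          y (j + n) ∣ y (j + t) * y (j + n + t) - 1 := by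
        intro t ht hat
        have htIcc := Finset.mem_Icc.mp (hT ▸ ht)
        have hrel := rel (j + t) (by omega)
        have hant : a (n - t) ≠ 0 := fun h0 => hat ((ha t (hT ▸ ht)).mpr h0)
        have hmemn : n - t ∈ T := by
          rw [hT]; exact Finset.mem_Icc.mpr ⟨by omega, by omega⟩
        have hdvdN : y (j + n) ∣ ∏ s ∈ T, y (j + t + s) ^ a s := by
          have hidx : j + t + (n - t) = j + n := by omega
          have hfac : y (j + n) ∣ y (j + t + (n - t)) ^ a (n - t) := by
            rw [hidx]
            exact dvd_pow_self _ hant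
          exact hfac.trans (Finset.dvd_prod_of_mem (fun s => y (j + t + s) ^ a s) hmemn)
        have hidx2 : j + t + n = j + n + t := by omega
        rw [hidx2] at hrel
        have heq : (∏ s ∈ T, y (j + t + s) ^ a s) = y (j + t) * y (j + n + t) - 1 := by
          rw [hrel]; ring
        exact heq ▸ hdvdN
      -- N_j ≡ -1 mod π
      have claim2 : y (j + n) ∣ (∏ t ∈ T, y (j + t) ^ a t) + 1 := by
        have hrel := rel j (by omega)
        exact ⟨y j, by rw [← hrel]; ring⟩
      -- the big product ≡ 1 mod π
      have claim3 : y (j + n) ∣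
          (∏ t ∈ T, y (j + t) ^ a t) * (∏ t ∈ T, y (j + n + t) ^ a t) - 1 := by
        have hBA : y (j + n) ∣ (∏ t ∈ T, (y (j + t) * y (j + n + t)) ^ a t) - 1 := by
          refine prodone T _ fun t ht => ?_
          by_cases hat : a t = 0
          · rw [hat, pow_zero]
            simp
          · exact powone _ _ (claim1 t ht hat)
        have hsplit : (∏ t ∈ T, (y (j + t) * y (j + n + t)) ^ a t)
            = (∏ t ∈ T, y (j + t) ^ a t) * (∏ t ∈ T, y (j + n + t) ^ a t) := by
          rw [← Finset.prod_mul_distrib]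
          exact Finset.prod_congr rfl fun t _ => mul_pow _ _ _
        rwa [hsplit] at hBA
      -- hence N_{j+n} ≡ -1 mod π
      have hfinal : y (j + n) ∣ (∏ t ∈ T, y (j + n + t) ^ a t) + 1 := by
        have h2 : (∏ t ∈ T, y (j + n + t) ^ a t) + 1
            = (∏ t ∈ T, y (j + n + t) ^ a t) * ((∏ t ∈ T, y (j + t) ^ a t) + 1)
              - ((∏ t ∈ T, y (j + t) ^ a t) * (∏ t ∈ T, y (j + n + t) ^ a t) - 1) := by
          ring
        rw [h2]
        exact dvd_sub (claim2.mul_left _) claim3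
      obtain ⟨c, hc⟩ := hfinal
      -- hc : (∏ …) + 1 = y (j + n) * c in S ; push to the field
      have hmem2 : ∀ t ∈ T, x (j + n + t) ∈ S := by
        intro t ht
        refine IH _ ?_
        have := (Finset.mem_Icc.mp (hT ▸ ht)).2
        omega
      have hK := congrArg (fun z : S => (z : FractionRing (MvPolynomial (Fin n) ℤ))) hc
      have h1 : ((y (j + n) * c : S) : FractionRing (MvPolynomial (Fin n) ℤ))
          = x (j + n) * (c : FractionRing (MvPolynomial (Fin n) ℤ)) := by
        push_cast
        rw [hy _ hπS]
      have h2 : (((∏ t ∈ T, y (j + n + t) ^ a t) + 1 : S) :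
            FractionRing (MvPolynomial (Fin n) ℤ))
          = (∏ t ∈ T, x (j + n + t) ^ a t) + 1 := by
        push_cast
        exact congrArg (· + 1) (Finset.prod_congr rfl fun t ht => by
          rw [hy _ (hmem2 t ht)])
      rw [h2, h1] at hK
      -- combine with the recurrence at j + n
      have hfin := hrec' (j + n)
      have hidx3 : j + n + n = j + 2 * n := by omega
      rw [hidx3] at hfin
      have hcan : x (j + n) * x (j + 2 * n)
          = x (j + n) * (c : FractionRing (MvPolynomial (Fin n) ℤ)) := by
        rw [hfin, hK]
      have hxk : x (j + 2 * n) = (c : FractionRing (MvPolynomial (Fin n) ℤ)) :=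
        mul_left_cancel₀ (hnz (j + n)) hcan
      rw [hxk]
      exact c.2
end

section
/- Fix n ≥ 2 and integers A, A_1, …, A_{n−1}. Suppose the polynomial P = ∑_{i=1}^{n−1} x_i² + A_1·E_1 + … + A_{n−1}·E_{n−1} + A, where E_k = ∑_{1≤i_1<…<i_k≤n−1} x_{i_1}⋯x_{i_k} is the k-th elementary symmetric polynomial in x_1,…,x_{n−1}, is irreducible in ℤ[x_1,…,x_{n−1}] and not divisible by any x_j. Then every term of any sequence x : ℕ → F generated by P is a Laurent polynomial. -/
open MvPolynomial

/-- `e_j` of the "middle" variables `x (m+1), …, x (m+n-1)`. -/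
private def ee {R : Type*} [CommRing R] (x : ℕ → R) (n m j : ℕ) : R :=
  ∑ t ∈ (Finset.Icc 1 (n - 1)).powersetCard j, ∏ i ∈ t, x (m + i)

private def RR {R : Type*} [CommRing R] (x : ℕ → R) (Ac : ℕ → ℤ) (n m : ℕ) : R :=
  ∑ k ∈ Finset.Icc 1 (n - 1), (Ac k : R) * ee x n m (k - 1)

private def WW {R : Type*} [CommRing R] (x : ℕ → R) (Ac : ℕ → ℤ) (n m : ℕ) : R :=
  x m + x (m + n) + RR x Ac n m

/-- `N` of the window `x m, …, x (m+n-1)` (bottom window). -/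
private def NB {R : Type*} [CommRing R] (x : ℕ → R) (Ac : ℕ → ℤ) (A : ℤ) (n m : ℕ) : R :=
  (∑ i ∈ Finset.range n, x (m + i) ^ 2)
    + (∑ k ∈ Finset.Icc 1 (n - 1), (Ac k : R) *
        ∑ t ∈ (Finset.range n).powersetCard k, ∏ i ∈ t, x (m + i))
    + A

/-- `N` of the window `x (m+1), …, x (m+n)` (top window, offsets from `m`). -/
private def NT {R : Type*} [CommRing R] (x : ℕ → R) (Ac : ℕ → ℤ) (A : ℤ) (n m : ℕ) : R :=
  (∑ i ∈ Finset.Icc 1 n, x (m + i) ^ 2)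
    + (∑ k ∈ Finset.Icc 1 (n - 1), (Ac k : R) *
        ∑ t ∈ (Finset.Icc 1 n).powersetCard k, ∏ i ∈ t, x (m + i))
    + A

private lemma aux_insert {R : Type*} [CommRing R] (f : ℕ → R) {a : ℕ} {s : Finset ℕ}
    (ha : a ∉ s) (j : ℕ) :
    ∑ t ∈ (insert a s).powersetCard (j + 1), ∏ i ∈ t, f i
      = (∑ t ∈ s.powersetCard (j + 1), ∏ i ∈ t, f i)
        + f a * ∑ t ∈ s.powersetCard j, ∏ i ∈ t, f i := by
  rw [Finset.powersetCard_succ_insert ha, Finset.sum_union, Finset.sum_image]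
  · congr 1
    rw [Finset.mul_sum]
    refine Finset.sum_congr rfl fun t ht => ?_
    have hts : t ⊆ s := (Finset.mem_powersetCard.mp ht).1
    rw [Finset.prod_insert fun h => ha (hts h)]
  · intro t ht t' ht' hins
    have hat : a ∉ t := fun h => ha ((Finset.mem_powersetCard.mp ht).1 h)
    have hat' : a ∉ t' := fun h => ha ((Finset.mem_powersetCard.mp ht').1 h)
    rw [← Finset.erase_insert hat, ← Finset.erase_insert hat', hins]
  · rw [Finset.disjoint_right]
    intro t ht ht'
    obtain ⟨u, hu, rfl⟩ := Finset.mem_image.mp ht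
    have : a ∉ insert a u → False := fun h => h (Finset.mem_insert_self a u)
    exact this fun h => (fun hh => (fun hsub => ((fun haa => haa) (by
      have hsub' := (Finset.mem_powersetCard.mp ht').1
      exact ha (hsub' (Finset.mem_insert_self a u))))) h) h

private lemma NB_eq {R : Type*} [CommRing R] (x : ℕ → R) (Ac : ℕ → ℤ) (A : ℤ) (n : ℕ)
    (hn : 1 ≤ n) (m : ℕ)
    (h : x m * x (m + n) = (∑ i ∈ Finset.Icc 1 (n - 1), x (m + i) ^ 2)
        + (∑ k ∈ Finset.Icc 1 (n - 1), (Ac k : R) * ee x n m k) + A) :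
    NB x Ac A n m = x m * WW x Ac n m := by
  have h0 : (0 : ℕ) ∉ Finset.Icc 1 (n - 1) := by simp
  have hins : Finset.range n = insert 0 (Finset.Icc 1 (n - 1)) := by
    ext i; simp only [Finset.mem_range, Finset.mem_insert, Finset.mem_Icc]; omega
  rw [NB, hins, Finset.sum_insert h0]
  have hEk : ∀ k ∈ Finset.Icc 1 (n - 1),
      (Ac k : R) * ∑ t ∈ (insert 0 (Finset.Icc 1 (n - 1))).powersetCard k, ∏ i ∈ t, x (m + i)
        = (Ac k : R) * ee x n m k + x m * ((Ac k : R) * ee x n m (k - 1)) := by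
    intro k hk
    obtain ⟨j, rfl⟩ : ∃ j, k = j + 1 :=
      ⟨k - 1, by have := (Finset.mem_Icc.mp hk).1; omega⟩
    rw [aux_insert (fun i => x (m + i)) h0 j]
    simp only [ee, Nat.add_sub_cancel, add_zero]
    ring
  rw [Finset.sum_congr rfl hEk, Finset.sum_add_distrib, ← Finset.mul_sum, ← RR]
  rw [WW, RR]
  simp only [add_zero]
  linear_combination -h

private lemma NT_eq {R : Type*} [CommRing R] (x : ℕ → R) (Ac : ℕ → ℤ) (A : ℤ) (n : ℕ)
    (hn : 1 ≤ n) (m : ℕ)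
    (h : x m * x (m + n) = (∑ i ∈ Finset.Icc 1 (n - 1), x (m + i) ^ 2)
        + (∑ k ∈ Finset.Icc 1 (n - 1), (Ac k : R) * ee x n m k) + A) :
    NT x Ac A n m = x (m + n) * WW x Ac n m := by
  have h0 : n ∉ Finset.Icc 1 (n - 1) := by simp only [Finset.mem_Icc]; omega
  have hins : Finset.Icc 1 n = insert n (Finset.Icc 1 (n - 1)) := by
    ext i; simp only [Finset.mem_insert, Finset.mem_Icc]; omega
  rw [NT, hins, Finset.sum_insert h0]
  have hEk : ∀ k ∈ Finset.Icc 1 (n - 1),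
      (Ac k : R) * ∑ t ∈ (insert n (Finset.Icc 1 (n - 1))).powersetCard k, ∏ i ∈ t, x (m + i)
        = (Ac k : R) * ee x n m k + x (m + n) * ((Ac k : R) * ee x n m (k - 1)) := by
    intro k hk
    obtain ⟨j, rfl⟩ : ∃ j, k = j + 1 :=
      ⟨k - 1, by have := (Finset.mem_Icc.mp hk).1; omega⟩
    rw [aux_insert (fun i => x (m + i)) h0 j]
    simp only [ee, Nat.add_sub_cancel]
    ring
  rw [Finset.sum_congr rfl hEk, Finset.sum_add_distrib, ← Finset.mul_sum, ← RR]
  rw [WW, RR]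
  linear_combination -h

private lemma NT_NB {R : Type*} [CommRing R] (x : ℕ → R) (Ac : ℕ → ℤ) (A : ℤ) (n m : ℕ) :
    NT x Ac A n m = NB x Ac A n (m + 1) := by
  have hmap : (Finset.range n).map ⟨Nat.succ, Nat.succ_injective⟩ = Finset.Icc 1 n := by
    ext i
    simp only [Finset.mem_map, Finset.mem_range, Finset.mem_Icc, Function.Embedding.coeFn_mk]
    constructor
    · rintro ⟨a, ha, rfl⟩; omega
    · intro hi; exact ⟨i - 1, by omega, by omega⟩
  rw [NT, NB, ← hmap]
  congr 1
  · congr 1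
    · rw [Finset.sum_map]
      refine Finset.sum_congr rfl fun i _ => ?_
      have : m + Nat.succ i = m + 1 + i := by omega
      simp only [Function.Embedding.coeFn_mk, this]
    · refine Finset.sum_congr rfl fun k _ => ?_
      congr 1
      rw [Finset.powersetCard_map, Finset.sum_map]
      refine Finset.sum_congr rfl fun t _ => ?_
      simp only [RelEmbedding.coe_toEmbedding, Finset.mapEmbedding_apply, Finset.prod_map,
        Function.Embedding.coeFn_mk]
      refine Finset.prod_congr rfl fun i _ => ?_
      congr 1
      omega

set_option maxHeartbeats 1000000 in
set_option synthInstance.maxHeartbeats 400000 in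
/-- Symmetric-with-second-powers case (family (1) of Theorem 3.7 with Corollary 3.8). -/
theorem stmt5 (n : ℕ) (hn : 2 ≤ n) (A : ℤ) (Acoef : ℕ → ℤ)
    (P : MvPolynomial ℕ ℤ)
    (hP : P = (∑ i ∈ Finset.Icc 1 (n - 1), X i ^ 2) +
        (∑ k ∈ Finset.Icc 1 (n - 1), C (Acoef k) *
          ∑ s ∈ Finset.powersetCard k (Finset.Icc 1 (n - 1)), ∏ i ∈ s, X i) +
        C A)
    (hirr : Irreducible P)
    (hndvd : ∀ j ∈ Finset.Icc 1 (n - 1), ¬ X j ∣ P)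
    (x : ℕ → FractionRing (MvPolynomial (Fin n) ℤ))
    (hinit : ∀ i : Fin n, x i =
      algebraMap (MvPolynomial (Fin n) ℤ) (FractionRing (MvPolynomial (Fin n) ℤ)) (X i))
    (hnz : ∀ m, x m ≠ 0)
    (hrec : ∀ m, x m * x (m + n) = aeval (fun i : ℕ => x (m + i)) P) :
    ∀ m, x m ∈ Subring.closure
      ((Set.range fun i : Fin n =>
          algebraMap (MvPolynomial (Fin n) ℤ) (FractionRing (MvPolynomial (Fin n) ℤ)) (X i)) ∪
        (Set.range fun i : Fin n =>
          (algebraMap (MvPolynomial (Fin n) ℤ) (FractionRing (MvPolynomial (Fin n) ℤ)) (X i))⁻¹)) := by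
  have hFdef : Nonempty (FractionRing (MvPolynomial (Fin n) ℤ)) := inferInstance
  set S := Subring.closure
      ((Set.range fun i : Fin n =>
          algebraMap (MvPolynomial (Fin n) ℤ) (FractionRing (MvPolynomial (Fin n) ℤ)) (X i)) ∪
        (Set.range fun i : Fin n =>
          (algebraMap (MvPolynomial (Fin n) ℤ) (FractionRing (MvPolynomial (Fin n) ℤ)) (X i))⁻¹)) with hS
  have hn1 : 1 ≤ n := by omega
  -- the recurrence, unfolded
  have hr : ∀ m, x m * x (m + n) = (∑ i ∈ Finset.Icc 1 (n - 1), x (m + i) ^ 2)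
      + (∑ k ∈ Finset.Icc 1 (n - 1), (Acoef k : FractionRing (MvPolynomial (Fin n) ℤ)) * ee x n m k) + ((A : ℤ) : FractionRing (MvPolynomial (Fin n) ℤ)) := by
    intro m
    rw [hrec m, hP]
    simp only [map_add, map_sum, map_mul, map_pow, map_prod, aeval_X, aeval_C, map_intCast,
      eq_intCast, ee]
  -- the telescoping identity
  have hdag : ∀ m, x (m + n) * WW x Acoef n m = x (m + 1) * WW x Acoef n (m + 1) := by
    intro m
    rw [← NT_eq x Acoef A n hn1 m (hr m), NT_NB, NB_eq x Acoef A n hn1 (m + 1) (hr (m + 1))]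
  -- products of the middles
  set Pi : ℕ → FractionRing (MvPolynomial (Fin n) ℤ) := fun m => ∏ i ∈ Finset.range (n - 1), x (m + 1 + i) with hPidef
  have hsplit : ∀ g : ℕ → FractionRing (MvPolynomial (Fin n) ℤ), ∏ i ∈ Finset.range n, g i
      = g 0 * ∏ i ∈ Finset.range (n - 1), g (i + 1) := by
    intro g
    have hone : n = n - 1 + 1 := by omega
    calc ∏ i ∈ Finset.range n, g i = ∏ i ∈ Finset.range (n - 1 + 1), g i := by rw [← hone]
      _ = (∏ i ∈ Finset.range (n - 1), g (i + 1)) * g 0 := Finset.prod_range_succ' g (n - 1)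
      _ = g 0 * ∏ i ∈ Finset.range (n - 1), g (i + 1) := mul_comm _ _
  have hprod : ∀ m, (∏ i ∈ Finset.range n, x (m + i)) = x m * Pi m := by
    intro m
    rw [hsplit fun i => x (m + i)]
    simp only [add_zero, hPidef]
    congr 1
    exact Finset.prod_congr rfl fun i _ => by congr 1; omega
  have hPitop : ∀ m, Pi m * x (m + n) = x (m + 1) * Pi (m + 1) := by
    intro m
    have h1 : Pi m * x (m + n) = ∏ i ∈ Finset.range n, x (m + 1 + i) := by
      have hone : n = n - 1 + 1 := by omega
      have e1 : ∏ i ∈ Finset.range n, x (m + 1 + i)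
          = (∏ i ∈ Finset.range (n - 1), x (m + 1 + i)) * x (m + 1 + (n - 1)) := by
        calc ∏ i ∈ Finset.range n, x (m + 1 + i)
            = ∏ i ∈ Finset.range (n - 1 + 1), x (m + 1 + i) := by rw [← hone]
          _ = _ := Finset.prod_range_succ _ _
      rw [e1]
      simp only [hPidef]
      congr 2
      omega
    have h2 : (∏ i ∈ Finset.range n, x (m + 1 + i)) = x (m + 1) * Pi (m + 1) := by
      rw [hsplit fun i => x (m + 1 + i)]
      simp only [add_zero, hPidef]
      congr 1
      exact Finset.prod_congr rfl fun i _ => by congr 1; omega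
    rw [h1, h2]
  -- the conserved quantity
  set K : FractionRing (MvPolynomial (Fin n) ℤ) := NB x Acoef A n 0 * (∏ i ∈ Finset.range n, x i)⁻¹ with hK
  have hprodne : (∏ i ∈ Finset.range n, x i) ≠ 0 :=
    Finset.prod_ne_zero_iff.mpr fun i _ => hnz i
  have hW : ∀ m, WW x Acoef n m = K * Pi m := by
    intro m
    induction m with
    | zero =>
      apply mul_left_cancel₀ (hnz 0)
      have hb : NB x Acoef A n 0 = x 0 * WW x Acoef n 0 := NB_eq x Acoef A n hn1 0 (hr 0)
      have hp0 : (∏ i ∈ Finset.range n, x i) = x 0 * Pi 0 := by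
        have := hprod 0
        simpa using this
      have hc : x 0 * (K * Pi 0) = NB x Acoef A n 0 := by
        calc x 0 * (K * Pi 0)
            = NB x Acoef A n 0 * ((∏ i ∈ Finset.range n, x i)⁻¹ * (x 0 * Pi 0)) := by
              rw [hK]; ring
          _ = NB x Acoef A n 0 * ((∏ i ∈ Finset.range n, x i)⁻¹ * ∏ i ∈ Finset.range n, x i) := by
              rw [← hp0]
          _ = NB x Acoef A n 0 := by rw [inv_mul_cancel₀ hprodne, mul_one]
      rw [hc]
      exact hb.symm
    | succ m ih =>
      apply mul_left_cancel₀ (hnz (m + 1))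
      calc x (m + 1) * WW x Acoef n (m + 1) = x (m + n) * WW x Acoef n m := (hdag m).symm
        _ = x (m + n) * (K * Pi m) := by rw [ih]
        _ = K * (Pi m * x (m + n)) := by ring
        _ = K * (x (m + 1) * Pi (m + 1)) := by rw [hPitop m]
        _ = x (m + 1) * (K * Pi (m + 1)) := by ring
  -- the Laurent recurrence
  have hx : ∀ m, x (m + n) = K * Pi m - x m - RR x Acoef n m := by
    intro m
    have := hW m
    rw [WW] at this
    linear_combination this
  -- membership facts
  have hxmem : ∀ i, i < n → x i ∈ S := by
    intro i hi
    apply Subring.subset_closure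
    exact Or.inl ⟨⟨i, hi⟩, (hinit ⟨i, hi⟩).symm⟩
  have hinvmem : ∀ i, i < n → (x i)⁻¹ ∈ S := by
    intro i hi
    apply Subring.subset_closure
    exact Or.inr ⟨⟨i, hi⟩, by rw [hinit ⟨i, hi⟩]⟩
  have hint : ∀ a : ℤ, ((a : ℤ) : FractionRing (MvPolynomial (Fin n) ℤ)) ∈ S := fun a => intCast_mem S a
  have hNB0 : NB x Acoef A n 0 ∈ S := by
    rw [NB]
    refine S.add_mem (S.add_mem ?_ ?_) (hint A)
    · refine Subring.sum_mem S fun i hi => ?_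
      have : (0 : ℕ) + i < n := by simpa using Finset.mem_range.mp hi
      exact S.pow_mem (hxmem _ this) 2
    · refine Subring.sum_mem S fun k _ => S.mul_mem (hint _) ?_
      refine Subring.sum_mem S fun t ht => ?_
      refine Subring.prod_mem S fun i hi => ?_
      have hsub := (Finset.mem_powersetCard.mp ht).1
      have : (0 : ℕ) + i < n := by
        have := Finset.mem_range.mp (hsub hi); omega
      exact hxmem _ this
  have hKmem : K ∈ S := by
    rw [hK, ← Finset.prod_inv_distrib]
    exact S.mul_mem hNB0 (Subring.prod_mem S fun i hi => hinvmem i (Finset.mem_range.mp hi))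
  -- main induction
  intro m
  induction m using Nat.strong_induction_on with
  | _ m ih =>
    rcases lt_or_ge m n with hlt | hge
    · exact hxmem m hlt
    · obtain ⟨m', rfl⟩ : ∃ m', m = m' + n := ⟨m - n, by omega⟩
      rw [hx m']
      refine S.sub_mem (S.sub_mem (S.mul_mem hKmem ?_) (ih m' (by omega))) ?_
      · refine Subring.prod_mem S fun i hi => ?_
        have hi' := Finset.mem_range.mp hi
        exact ih _ (by omega)
      · rw [RR]
        refine Subring.sum_mem S fun k _ => S.mul_mem (hint _) ?_
        refine Subring.sum_mem S fun t ht => ?_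
        refine Subring.prod_mem S fun i hi => ?_
        have hsub := (Finset.mem_powersetCard.mp ht).1
        have hii := Finset.mem_Icc.mp (hsub hi)
        exact ih _ (by omega)
end

section
/- Fix n ≥ 2 and integers A, B. Suppose the polynomial P = x_1·x_{n−1} + A·(x_1 + x_2 + … + x_{n−1}) + B is irreducible in ℤ[x_1,…,x_{n−1}] and not divisible by any x_j. Then every term of any sequence x : ℕ → F generated by P is a Laurent polynomial. -/
open MvPolynomial

set_option maxHeartbeats 1000000 in
set_option synthInstance.maxHeartbeats 400000 in
/-- Extreme polynomial case (family (3) of Theorem 3.7 with Corollary 3.8). -/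
theorem stmt6 (n : ℕ) (hn : 2 ≤ n) (A B : ℤ)
    (P : MvPolynomial ℕ ℤ)
    (hP : P = X 1 * X (n - 1) + C A * (∑ i ∈ Finset.Icc 1 (n - 1), X i) + C B)
    (hirr : Irreducible P)
    (hndvd : ∀ j ∈ Finset.Icc 1 (n - 1), ¬ X j ∣ P)
    (x : ℕ → FractionRing (MvPolynomial (Fin n) ℤ))
    (hinit : ∀ i : Fin n, x i =
      algebraMap (MvPolynomial (Fin n) ℤ) (FractionRing (MvPolynomial (Fin n) ℤ)) (X i))
    (hnz : ∀ m, x m ≠ 0)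
    (hrec : ∀ m, x m * x (m + n) = aeval (fun i : ℕ => x (m + i)) P) :
    ∀ m, x m ∈ Subring.closure
      ((Set.range fun i : Fin n =>
          algebraMap (MvPolynomial (Fin n) ℤ) (FractionRing (MvPolynomial (Fin n) ℤ)) (X i)) ∪
        (Set.range fun i : Fin n =>
          (algebraMap (MvPolynomial (Fin n) ℤ) (FractionRing (MvPolynomial (Fin n) ℤ)) (X i))⁻¹)) := by
  obtain ⟨k, rfl⟩ : ∃ k, n = k + 2 := ⟨n - 2, by omega⟩
  set L := Subring.closure
      ((Set.range fun i : Fin (k + 2) =>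
          algebraMap (MvPolynomial (Fin (k + 2)) ℤ)
            (FractionRing (MvPolynomial (Fin (k + 2)) ℤ)) (X i)) ∪
        (Set.range fun i : Fin (k + 2) =>
          (algebraMap (MvPolynomial (Fin (k + 2)) ℤ)
            (FractionRing (MvPolynomial (Fin (k + 2)) ℤ)) (X i))⁻¹)) with hL
  rw [show k + 2 - 1 = k + 1 from rfl] at hP
  -- basic memberships
  have hmemlt : ∀ m, m < k + 2 → x m ∈ L := by
    intro m hm
    have h1 : x m = algebraMap (MvPolynomial (Fin (k + 2)) ℤ)
        (FractionRing (MvPolynomial (Fin (k + 2)) ℤ)) (X (⟨m, hm⟩ : Fin (k + 2))) :=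
      hinit ⟨m, hm⟩
    rw [h1]
    exact Subring.subset_closure (Or.inl ⟨_, rfl⟩)
  have hinvlt : ∀ m, m < k + 2 → (x m)⁻¹ ∈ L := by
    intro m hm
    have h1 : x m = algebraMap (MvPolynomial (Fin (k + 2)) ℤ)
        (FractionRing (MvPolynomial (Fin (k + 2)) ℤ)) (X (⟨m, hm⟩ : Fin (k + 2))) :=
      hinit ⟨m, hm⟩
    rw [h1]
    exact Subring.subset_closure (Or.inr ⟨_, rfl⟩)
  -- the recurrence, spelled out
  have E : ∀ m, x m * x (m + k + 2) =
      x (m + 1) * x (m + k + 1)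
        + (A : FractionRing (MvPolynomial (Fin (k + 2)) ℤ))
            * (∑ i ∈ Finset.Icc 1 (k + 1), x (m + i))
        + (B : FractionRing (MvPolynomial (Fin (k + 2)) ℤ)) := by
    intro m
    have h := hrec m
    rw [hP] at h
    simp only [map_add, map_mul, aeval_X, aeval_C, map_sum, map_intCast, algebraMap_int_eq,
      eq_intCast] at h
    simp only [← add_assoc] at h
    exact h
  -- rewrite Icc sums as range sums
  have ha : ∀ l, ∑ i ∈ Finset.Icc 1 (k + 1), x (l + i)
      = ∑ j ∈ Finset.range (k + 1), x (l + 1 + j) := by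
    intro l
    rw [← Finset.Ico_add_one_right_eq_Icc, Finset.sum_Ico_eq_sum_range]
    rw [show k + 1 + 1 - 1 = k + 1 from rfl]
    exact Finset.sum_congr rfl fun j _ => by rw [show l + (1 + j) = l + 1 + j by omega]
  -- sum shift identity
  have hs : ∀ m, ∑ i ∈ Finset.Icc 1 (k + 1), x (m + 1 + i)
      = (∑ i ∈ Finset.Icc 1 (k + 1), x (m + i)) + x (m + k + 2) - x (m + 1) := by
    intro m
    rw [ha (m + 1), ha m]
    rw [Finset.sum_range_succ (fun j => x (m + 1 + 1 + j)) k]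
    rw [Finset.sum_range_succ' (fun j => x (m + 1 + j)) k]
    have hc : ∑ j ∈ Finset.range k, x (m + 1 + 1 + j)
        = ∑ j ∈ Finset.range k, x (m + 1 + (j + 1)) :=
      Finset.sum_congr rfl fun j _ => by rw [show m + 1 + 1 + j = m + 1 + (j + 1) by omega]
    rw [show m + 1 + 1 + k = m + k + 2 by omega, show m + 1 + 0 = m + 1 by omega]
    linear_combination hc
  -- the key product identity
  have key : ∀ m, x (m + 1) * (x (m + k + 3) + x (m + k + 1)
        + (A : FractionRing (MvPolynomial (Fin (k + 2)) ℤ)))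
      = x (m + k + 2) * (x (m + 2) + x m
        + (A : FractionRing (MvPolynomial (Fin (k + 2)) ℤ))) := by
    intro m
    have e1 := E m
    have e2 := E (m + 1)
    simp only [show m + 1 + k + 2 = m + k + 3 by omega,
      show m + 1 + k + 1 = m + k + 2 by omega] at e2
    have hsm := hs m
    linear_combination e2 - e1 + (A : FractionRing (MvPolynomial (Fin (k + 2)) ℤ)) * hsm
  -- periodicity of the ratio
  have hper : ∀ m, (x (m + k + 3) + x (m + k + 1)
          + (A : FractionRing (MvPolynomial (Fin (k + 2)) ℤ))) * (x (m + k + 2))⁻¹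
      = (x (m + 2) + x m
          + (A : FractionRing (MvPolynomial (Fin (k + 2)) ℤ))) * (x (m + 1))⁻¹ := by
    intro m
    rw [← div_eq_mul_inv, ← div_eq_mul_inv, div_eq_div_iff (hnz (m + k + 2)) (hnz (m + 1))]
    linear_combination key m
  -- x n is Laurent
  have hxn : x (k + 2) ∈ L := by
    have e := E 0
    simp only [zero_add] at e
    have hx : x (k + 2) = (x 0)⁻¹ *
        (x 1 * x (k + 1)
          + (A : FractionRing (MvPolynomial (Fin (k + 2)) ℤ))
              * (∑ i ∈ Finset.Icc 1 (k + 1), x i)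
          + (B : FractionRing (MvPolynomial (Fin (k + 2)) ℤ))) := by
      rw [← e, inv_mul_cancel_left₀ (hnz 0)]
    rw [hx]
    refine mul_mem (hinvlt 0 (by omega))
      (add_mem (add_mem (mul_mem ?_ ?_) (mul_mem ?_ ?_)) ?_)
    · exact hmemlt 1 (by omega)
    · exact hmemlt (k + 1) (by omega)
    · exact intCast_mem L A
    · refine Subring.sum_mem _ fun i hi => ?_
      rw [Finset.mem_Icc] at hi
      exact hmemlt i (by omega)
    · exact intCast_mem L B
  -- the periodic coefficients are Laurent
  have hq : ∀ m, (x (m + 2) + x m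
      + (A : FractionRing (MvPolynomial (Fin (k + 2)) ℤ))) * (x (m + 1))⁻¹ ∈ L := by
    intro m
    induction m using Nat.strong_induction_on with
    | _ m ih =>
      rcases lt_or_ge m (k + 1) with h | h
      · refine mul_mem (add_mem (add_mem ?_ (hmemlt m (by omega))) (intCast_mem L A))
          (hinvlt (m + 1) (by omega))
        rcases lt_or_ge (m + 2) (k + 2) with h2 | h2
        · exact hmemlt (m + 2) h2
        · rw [show m + 2 = k + 2 by omega]; exact hxn
      · obtain ⟨j, rfl⟩ : ∃ j, m = j + (k + 1) := ⟨m - (k + 1), by omega⟩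
        rw [show j + (k + 1) + 2 = j + k + 3 by omega,
          show j + (k + 1) = j + k + 1 by omega,
          show j + k + 1 + 1 = j + k + 2 by omega, hper j]
        exact ih j (by omega)
  -- final strong induction
  intro m
  induction m using Nat.strong_induction_on with
  | _ m ih =>
    rcases lt_or_ge m (k + 2) with h | h
    · exact hmemlt m h
    · obtain ⟨j, rfl⟩ : ∃ j, m = j + 2 := ⟨m - 2, by omega⟩
      have hE2 : x (j + 2) = (x (j + 2) + x j
            + (A : FractionRing (MvPolynomial (Fin (k + 2)) ℤ))) * (x (j + 1))⁻¹ * x (j + 1)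
          - x j - (A : FractionRing (MvPolynomial (Fin (k + 2)) ℤ)) := by
        rw [inv_mul_cancel_right₀ (hnz (j + 1))]
        ring
      rw [hE2]
      exact sub_mem (sub_mem (mul_mem (hq j) (ih (j + 1) (by omega))) (ih j (by omega)))
        (intCast_mem L A)
end

section
/- Fix an odd integer n > 2 and integers A, B. Suppose the polynomial P = ∑_{i=1}^{n−2} x_i·x_{i+1} + A·(x_1 + … + x_{n−1}) + B is irreducible in ℤ[x_1,…,x_{n−1}] and not divisible by any x_j. Then every term of any sequence x : ℕ → F generated by P is a Laurent polynomial. -/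
open MvPolynomial

set_option maxHeartbeats 1000000 in
set_option synthInstance.maxHeartbeats 1000000 in
/-- Chain polynomial case (family (5) of Theorem 3.7 with Corollary 3.8). -/
theorem stmt7 (n : ℕ) (hn : 2 < n) (hodd : Odd n) (A B : ℤ)
    (P : MvPolynomial ℕ ℤ)
    (hP : P = (∑ i ∈ Finset.Icc 1 (n - 2), X i * X (i + 1)) +
        C A * (∑ i ∈ Finset.Icc 1 (n - 1), X i) + C B)
    (hirr : Irreducible P)
    (hndvd : ∀ j ∈ Finset.Icc 1 (n - 1), ¬ X j ∣ P)
    (x : ℕ → FractionRing (MvPolynomial (Fin n) ℤ))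
    (hinit : ∀ i : Fin n, x i =
      algebraMap (MvPolynomial (Fin n) ℤ) (FractionRing (MvPolynomial (Fin n) ℤ)) (X i))
    (hnz : ∀ m, x m ≠ 0)
    (hrec : ∀ m, x m * x (m + n) = aeval (fun i : ℕ => x (m + i)) P) :
    ∀ m, x m ∈ Subring.closure
      ((Set.range fun i : Fin n =>
          algebraMap (MvPolynomial (Fin n) ℤ) (FractionRing (MvPolynomial (Fin n) ℤ)) (X i)) ∪
        (Set.range fun i : Fin n =>
          (algebraMap (MvPolynomial (Fin n) ℤ) (FractionRing (MvPolynomial (Fin n) ℤ)) (X i))⁻¹)) := by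
  classical
  obtain ⟨k, hk⟩ := hodd
  have hk1 : 1 ≤ k := by omega
  set S := Subring.closure
      ((Set.range fun i : Fin n =>
          algebraMap (MvPolynomial (Fin n) ℤ) (FractionRing (MvPolynomial (Fin n) ℤ)) (X i)) ∪
        (Set.range fun i : Fin n =>
          (algebraMap (MvPolynomial (Fin n) ℤ) (FractionRing (MvPolynomial (Fin n) ℤ)) (X i))⁻¹))
    with hS
  -- rewrite the recurrence concretely
  have hrec' : ∀ m, x m * x (m + n) =
      (∑ i ∈ Finset.Icc 1 (n - 2), x (m + i) * x (m + i + 1)) +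
        (A : FractionRing (MvPolynomial (Fin n) ℤ)) * (∑ i ∈ Finset.Icc 1 (n - 1), x (m + i)) +
        (B : FractionRing (MvPolynomial (Fin n) ℤ)) := by
    intro m
    rw [hrec m, hP]
    simp only [map_add, map_mul, map_sum, aeval_X, aeval_C, algebraMap_int_eq, eq_intCast, map_intCast]
    simp only [← add_assoc]
  -- shift lemma for sums
  have shift : ∀ (f : ℕ → FractionRing (MvPolynomial (Fin n) ℤ)) (a b : ℕ),
      ∑ i ∈ Finset.Icc a b, f (i + 1) = ∑ i ∈ Finset.Icc (a + 1) (b + 1), f i := by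
    intro f a b
    rw [← Finset.map_add_right_Icc a b 1, Finset.sum_map]
    rfl
  -- the key cross relation
  have key : ∀ m, x (m + 1) * (x (m + 2) + x (m + n + 1) + (A : _)) =
      x (m + n) * (x m + x (m + n - 1) + (A : _)) := by
    intro m
    have h0 := hrec' m
    have h1 := hrec' (m + 1)
    have e1 : ∑ i ∈ Finset.Icc 1 (n - 2), x (m + 1 + i) * x (m + 1 + i + 1)
        = ∑ i ∈ Finset.Icc 2 (n - 1), x (m + i) * x (m + i + 1) := by
      have hs := shift (fun i => x (m + i) * x (m + i + 1)) 1 (n - 2)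
      rw [show n - 2 + 1 = n - 1 by omega] at hs
      rw [← hs]
      exact Finset.sum_congr rfl fun i _ => by
        rw [show m + 1 + i = m + (i + 1) by omega]
    have e2 : ∑ i ∈ Finset.Icc 1 (n - 1), x (m + 1 + i)
        = ∑ i ∈ Finset.Icc 2 n, x (m + i) := by
      have hs := shift (fun i => x (m + i)) 1 (n - 1)
      rw [show n - 1 + 1 = n by omega] at hs
      rw [← hs]
      exact Finset.sum_congr rfl fun i _ => by rw [show m + 1 + i = m + (i + 1) by omega]
    rw [e1, e2, show m + 1 + n = m + n + 1 by omega] at h1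
    -- boundary relations
    have hins1 : Finset.Icc 1 (n - 1) = insert 1 (Finset.Icc 2 (n - 1)) := by
      ext j; simp only [Finset.mem_Icc, Finset.mem_insert]; omega
    have hins2 : Finset.Icc 1 n = insert 1 (Finset.Icc 2 n) := by
      ext j; simp only [Finset.mem_Icc, Finset.mem_insert]; omega
    have hb : (∑ i ∈ Finset.Icc 1 (n - 2), x (m + i) * x (m + i + 1)) +
        x (m + n - 1) * x (m + n) =
        x (m + 1) * x (m + 2) + ∑ i ∈ Finset.Icc 2 (n - 1), x (m + i) * x (m + i + 1) := by
      have t1 : ∑ i ∈ Finset.Icc 1 (n - 1), x (m + i) * x (m + i + 1)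
          = (∑ i ∈ Finset.Icc 1 (n - 2), x (m + i) * x (m + i + 1)) +
            x (m + n - 1) * x (m + n) := by
        have ht := Finset.sum_Icc_succ_top (a := 1) (b := n - 2) (by omega)
          (fun i => x (m + i) * x (m + i + 1))
        rw [show n - 2 + 1 = n - 1 by omega, show m + (n - 1) = m + n - 1 by omega,
          show m + n - 1 + 1 = m + n by omega] at ht
        exact ht
      have t2 : ∑ i ∈ Finset.Icc 1 (n - 1), x (m + i) * x (m + i + 1)
          = x (m + 1) * x (m + 2) + ∑ i ∈ Finset.Icc 2 (n - 1), x (m + i) * x (m + i + 1) := by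
        rw [hins1, Finset.sum_insert (by simp)]
      rw [← t1, t2]
    have hl : (∑ i ∈ Finset.Icc 1 (n - 1), x (m + i)) + x (m + n) =
        x (m + 1) + ∑ i ∈ Finset.Icc 2 n, x (m + i) := by
      have t1 : ∑ i ∈ Finset.Icc 1 n, x (m + i)
          = (∑ i ∈ Finset.Icc 1 (n - 1), x (m + i)) + x (m + n) := by
        have ht := Finset.sum_Icc_succ_top (a := 1) (b := n - 1) (by omega)
          (fun i => x (m + i))
        rw [show n - 1 + 1 = n by omega] at ht
        exact ht
      have t2 : ∑ i ∈ Finset.Icc 1 n, x (m + i)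
          = x (m + 1) + ∑ i ∈ Finset.Icc 2 n, x (m + i) := by
        rw [hins2, Finset.sum_insert (by simp)]
      rw [← t1, t2]
    linear_combination h1 - h0 - hb - (A : FractionRing (MvPolynomial (Fin n) ℤ)) * hl
  -- product decompositions
  have prsplit : ∀ q, ∏ j ∈ Finset.range k, x (q + (2 * j + 1)) =
      (∏ j ∈ Finset.range (k - 1), x (q + (2 * j + 3))) * x (q + 1) := by
    intro q
    obtain ⟨l, rfl⟩ : ∃ l, k = l + 1 := ⟨k - 1, by omega⟩
    rw [Finset.prod_range_succ']
    simp only [Nat.add_sub_cancel]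
    congr 1
  have prtop : ∀ q, ∏ j ∈ Finset.range k, x (q + 2 + (2 * j + 1)) =
      (∏ j ∈ Finset.range (k - 1), x (q + (2 * j + 3))) * x (q + n) := by
    intro q
    obtain ⟨l, rfl⟩ : ∃ l, k = l + 1 := ⟨k - 1, by omega⟩
    rw [Finset.prod_range_succ]
    simp only [Nat.add_sub_cancel]
    congr 1
    · exact Finset.prod_congr rfl fun j _ => by
        rw [show q + 2 + (2 * j + 1) = q + (2 * j + 3) by omega]
    · rw [show q + 2 + (2 * l + 1) = q + n by omega]
  have prnz : ∀ q, (∏ j ∈ Finset.range k, x (q + (2 * j + 1))) ≠ 0 := fun q =>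
    Finset.prod_ne_zero_iff.mpr fun j _ => hnz _
  -- the 2-periodic quantity
  set T : ℕ → FractionRing (MvPolynomial (Fin n) ℤ) := fun q =>
      (x q + x (q + n - 1) + (A : _)) / (∏ j ∈ Finset.range k, x (q + (2 * j + 1))) with hT
  have Tper : ∀ q, T (q + 2) = T q := by
    intro q
    rw [hT]
    simp only
    rw [div_eq_div_iff (prnz (q + 2)) (prnz q), show q + 2 + n - 1 = q + n + 1 by omega,
      prsplit q, prtop q]
    linear_combination (∏ j ∈ Finset.range (k - 1), x (q + (2 * j + 3))) * key q
  have xrec : ∀ q, x (q + n - 1) =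
      T q * (∏ j ∈ Finset.range k, x (q + (2 * j + 1))) - x q - (A : _) := by
    intro q
    rw [hT]
    simp only
    rw [div_mul_cancel₀ _ (prnz q)]
    ring
  -- basic memberships
  have hxS : ∀ i, i < n → x i ∈ S := by
    intro i hi
    have h := hinit ⟨i, hi⟩
    rw [show ((⟨i, hi⟩ : Fin n) : ℕ) = i from rfl] at h
    rw [h, hS]
    exact Subring.subset_closure (Or.inl ⟨⟨i, hi⟩, rfl⟩)
  have hxinv : ∀ i, i < n → (x i)⁻¹ ∈ S := by
    intro i hi
    have h := hinit ⟨i, hi⟩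
    rw [show ((⟨i, hi⟩ : Fin n) : ℕ) = i from rfl] at h
    rw [h, hS]
    exact Subring.subset_closure (Or.inr ⟨⟨i, hi⟩, rfl⟩)
  have hxn : x n ∈ S := by
    have h := hrec' 0
    simp only [Nat.zero_add, zero_add] at h
    have hx : x n = (x 0)⁻¹ * (x 0 * x n) := by
      rw [← mul_assoc, inv_mul_cancel₀ (hnz 0), one_mul]
    rw [hx, h]
    refine S.mul_mem (hxinv 0 (by omega)) (S.add_mem (S.add_mem ?_ ?_) (intCast_mem S B))
    · exact Subring.sum_mem _ fun i hi => by
        have hi' := Finset.mem_Icc.mp hi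
        exact S.mul_mem (hxS i (by omega)) (hxS (i + 1) (by omega))
    · exact S.mul_mem (intCast_mem S A) (Subring.sum_mem _ fun i hi => by
        have hi' := Finset.mem_Icc.mp hi
        exact hxS i (by omega))
  have hT0 : T 0 ∈ S := by
    rw [hT]
    simp only
    rw [div_eq_mul_inv, ← Finset.prod_inv_distrib]
    refine S.mul_mem (S.add_mem (S.add_mem (hxS 0 (by omega)) (hxS (0 + n - 1) (by omega)))
      (intCast_mem S A)) (Subring.prod_mem _ fun j hj => ?_)
    have := Finset.mem_range.mp hj
    exact hxinv _ (by omega)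
  have hT1 : T 1 ∈ S := by
    rw [hT]
    simp only
    rw [div_eq_mul_inv, ← Finset.prod_inv_distrib, show 1 + n - 1 = n by omega]
    refine S.mul_mem (S.add_mem (S.add_mem (hxS 1 (by omega)) hxn)
      (intCast_mem S A)) (Subring.prod_mem _ fun j hj => ?_)
    have := Finset.mem_range.mp hj
    exact hxinv _ (by omega)
  have hTall : ∀ q, T q ∈ S := by
    intro q
    induction q using Nat.strong_induction_on with
    | _ q ih =>
      match q with
      | 0 => exact hT0
      | 1 => exact hT1
      | (r + 2) => rw [Tper r]; exact ih r (by omega)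
  -- main induction
  intro m
  induction m using Nat.strong_induction_on with
  | _ m ih =>
    by_cases hm : m < n
    · exact hxS m hm
    · push_neg at hm
      have hq : (m - n + 1) + n - 1 = m := by omega
      rw [← hq, xrec (m - n + 1)]
      refine S.sub_mem (S.sub_mem (S.mul_mem (hTall (m - n + 1))
        (Subring.prod_mem _ fun j hj => ?_)) (ih (m - n + 1) (by omega))) (intCast_mem S A)
      have := Finset.mem_range.mp hj
      exact ih _ (by omega)
end

section
/- Let K be a field, n ≥ 2 a natural number, A, B ∈ K, and let x : ℕ → K be a sequence with x_m ≠ 0 for all m satisfying x_m · x_{m+n} = ∑_{i=1}^{n−1} x_{m+i}² + A·∑_{i=1}^{n−1} x_{m+i} + B for all m ≥ 0. Define J_m = (∑_{i=0}^{n−1} x_{m+i}² + A·∑_{i=0}^{n−1} x_{m+i} + B) / ∏_{i=0}^{n−1} x_{m+i}. Then J_{m+1} = J_m for all m ≥ 0, i.e. J_m is a conserved quantity of the recurrence. -/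
section aux

variable {K : Type*} [Field K]

lemma aux_icc (f : ℕ → K) (k m : ℕ) :
    ∑ i ∈ Finset.Icc 1 k, f (m + i) = ∑ i ∈ Finset.range k, f (m + 1 + i) := by
  rw [← Finset.Ico_add_one_right_eq_Icc, Finset.sum_Ico_eq_sum_range]
  refine Finset.sum_congr (by simp) fun i _ => by
    congr 1; omega

lemma aux_range_succ' (f : ℕ → K) (k m : ℕ) :
    ∑ i ∈ Finset.range (k + 1), f (m + i)
      = f m + ∑ i ∈ Finset.range k, f (m + 1 + i) := by
  rw [Finset.sum_range_succ', Nat.add_zero, add_comm]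
  exact congrArg (f m + ·) (Finset.sum_congr rfl fun i _ => by congr 1; omega)

lemma aux_range_succ (f : ℕ → K) (k m : ℕ) :
    ∑ i ∈ Finset.range (k + 1), f (m + 1 + i)
      = (∑ i ∈ Finset.range k, f (m + 1 + i)) + f (m + 1 + k) := by
  rw [Finset.sum_range_succ]

lemma aux_prod_succ' (f : ℕ → K) (k m : ℕ) :
    ∏ i ∈ Finset.range (k + 1), f (m + i)
      = f m * ∏ i ∈ Finset.range k, f (m + 1 + i) := by
  rw [Finset.prod_range_succ', Nat.add_zero, mul_comm]
  exact congrArg (f m * ·) (Finset.prod_congr rfl fun i _ => by congr 1; omega)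

end aux

/-- Section 7.1: the conserved quantity for the recurrence generated by
`P = ∑ x_i² + A·∑ x_i + B`. -/
theorem stmt12 {K : Type*} [Field K] (n : ℕ) (hn : 2 ≤ n) (A B : K)
    (x : ℕ → K) (hnz : ∀ m, x m ≠ 0)
    (hrec : ∀ m, x m * x (m + n) =
      (∑ i ∈ Finset.Icc 1 (n - 1), (x (m + i)) ^ 2) +
        A * (∑ i ∈ Finset.Icc 1 (n - 1), x (m + i)) + B)
    (J : ℕ → K)
    (hJ : ∀ m, J m =
      ((∑ i ∈ Finset.range n, (x (m + i)) ^ 2) +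
          A * (∑ i ∈ Finset.range n, x (m + i)) + B) /
        ∏ i ∈ Finset.range n, x (m + i)) :
    ∀ m, J (m + 1) = J m := by
  obtain ⟨k, rfl⟩ : ∃ k, n = k + 1 := ⟨n - 1, by omega⟩
  intro m
  have hk1 : k + 1 - 1 = k := rfl
  set s2 : K := ∑ i ∈ Finset.range k, (x (m + 1 + i)) ^ 2 with hs2
  set s1 : K := ∑ i ∈ Finset.range k, x (m + 1 + i) with hs1
  set p : K := ∏ i ∈ Finset.range k, x (m + 1 + i) with hp
  have hrm := hrec m
  rw [hk1, aux_icc (fun j => (x j) ^ 2) k m, aux_icc x k m, ← hs2, ← hs1] at hrm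
  have hxp : p ≠ 0 := Finset.prod_ne_zero_iff.mpr fun i _ => hnz _
  have hxa : x m ≠ 0 := hnz m
  have hxb : x (m + (k + 1)) ≠ 0 := hnz _
  rw [hJ m, hJ (m + 1),
    aux_range_succ' (fun j => (x j) ^ 2) k m, aux_range_succ' x k m,
    aux_prod_succ' x k m,
    aux_range_succ (fun j => (x j) ^ 2) k m, aux_range_succ x k m,
    Finset.prod_range_succ, ← hs2, ← hs1, ← hp]
  have hbb : x (m + 1 + k) = x (m + (k + 1)) := by congr 1; omega
  rw [hbb]
  field_simp
  linear_combination ((x (m + (k + 1)) - x m)) * hrm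
end

section
/- Let K be a field, n ≥ 2 a natural number, A, B ∈ K, and let x : ℕ → K be a sequence with x_m ≠ 0 for all m satisfying x_m · x_{m+n} = ∑_{i=1}^{n−1} x_{m+i}² + A·∑_{i=1}^{n−1} x_{m+i} + B for all m ≥ 0. Let J = (∑_{i=0}^{n−1} x_i² + A·∑_{i=0}^{n−1} x_i + B) / ∏_{i=0}^{n−1} x_i. Then for all m ≥ 0, x_{m+n} = J·∏_{i=1}^{n−1} x_{m+i} − x_m − A. -/
section aux

variable {K : Type*} [CommMonoid K]

@[to_additive]
lemma prod_range_split (n : ℕ) (hn : 1 ≤ n) (f : ℕ → K) :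
    ∏ i ∈ Finset.range n, f i = f 0 * ∏ i ∈ Finset.Icc 1 (n - 1), f i := by
  have h1 : Finset.Icc 1 (n - 1) = Finset.Ico 1 n := by
    ext i; simp only [Finset.mem_Icc, Finset.mem_Ico]; omega
  rw [h1, Finset.range_eq_Ico, ← Finset.prod_Ico_consecutive f (by omega : 0 ≤ 1) hn]
  simp

@[to_additive]
lemma prod_Icc_shift (n : ℕ) (hn : 1 ≤ n) (f : ℕ → K) :
    ∏ i ∈ Finset.Icc 1 (n - 1), f i = ∏ i ∈ Finset.range (n - 1), f (1 + i) := by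
  have h1 : Finset.Icc 1 (n - 1) = Finset.Ico 1 n := by
    ext i; simp only [Finset.mem_Icc, Finset.mem_Ico]; omega
  rw [h1, Finset.prod_Ico_eq_prod_range]

end aux

/-- Section 7.1: multilinearization of the recurrence generated by
`P = ∑ x_i² + A·∑ x_i + B`. -/
theorem stmt13 {K : Type*} [Field K] (n : ℕ) (hn : 2 ≤ n) (A B : K)
    (x : ℕ → K) (hnz : ∀ m, x m ≠ 0)
    (hrec : ∀ m, x m * x (m + n) =
      (∑ i ∈ Finset.Icc 1 (n - 1), (x (m + i)) ^ 2) +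
        A * (∑ i ∈ Finset.Icc 1 (n - 1), x (m + i)) + B)
    (J : K)
    (hJ : J = ((∑ i ∈ Finset.range n, (x i) ^ 2) +
        A * (∑ i ∈ Finset.range n, x i) + B) / ∏ i ∈ Finset.range n, x i) :
    ∀ m, x (m + n) = J * (∏ i ∈ Finset.Icc 1 (n - 1), x (m + i)) - x m - A := by
  have hn1 : 1 ≤ n := by omega
  set S : ℕ → K := fun m =>
    (∑ i ∈ Finset.range n, (x (m + i)) ^ 2) +
      A * (∑ i ∈ Finset.range n, x (m + i)) + B with hS
  set P : ℕ → K := fun m => ∏ i ∈ Finset.range n, x (m + i) with hP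
  -- S m in terms of the recurrence
  have hSm : ∀ m, S m = x m * (x m + A + x (m + n)) := by
    intro m
    have h1 := sum_range_split n hn1 (fun i => (x (m + i)) ^ 2)
    have h2 := sum_range_split n hn1 (fun i => x (m + i))
    simp only [hS, h1, h2, Nat.add_zero]
    linear_combination -(hrec m)
  -- S (m+1) in terms of the recurrence
  have hSm1 : ∀ m, S (m + 1) = x (m + n) * (x (m + n) + A + x m) := by
    intro m
    have e1 : ∀ f : ℕ → K, ∑ i ∈ Finset.range n, f (m + 1 + i) =
        (∑ i ∈ Finset.Icc 1 (n - 1), f (m + i)) + f (m + n) := by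
      intro f
      have : n = (n - 1) + 1 := by omega
      rw [this, Finset.sum_range_succ, sum_Icc_shift ((n-1)+1) (by omega) (fun i => f (m + i))]
      congr 1
      · apply Finset.sum_congr rfl
        intro i _
        congr 1
        omega
      · congr 1
        omega
    have h1 := e1 (fun i => (x i) ^ 2)
    have h2 := e1 (fun i => x i)
    simp only [hS, h1, h2]
    linear_combination -(hrec m)
  -- P (m+1) * x m = P m * x (m + n)
  have hPm : ∀ m, P (m + 1) * x m = P m * x (m + n) := by
    intro m
    have e1 : ∀ f : ℕ → K, ∏ i ∈ Finset.range n, f (m + 1 + i) =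
        (∏ i ∈ Finset.Icc 1 (n - 1), f (m + i)) * f (m + n) := by
      intro f
      have : n = (n - 1) + 1 := by omega
      rw [this, Finset.prod_range_succ, prod_Icc_shift ((n-1)+1) (by omega) (fun i => f (m + i))]
      congr 1
      · apply Finset.prod_congr rfl
        intro i _
        congr 1
        omega
      · congr 1
        omega
    have h1 := e1 x
    have h2 := prod_range_split n hn1 (fun i => x (m + i))
    simp only [hP, h1, h2, Nat.add_zero]
    ring
  have hPnz : ∀ m, P m ≠ 0 := by
    intro m
    exact Finset.prod_ne_zero_iff.mpr (fun i _ => hnz (m + i))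
  -- S m = J * P m by induction
  have hkey : ∀ m, S m = J * P m := by
    intro m
    induction m with
    | zero =>
      have h0 : P 0 = ∏ i ∈ Finset.range n, x i := by
        simp [hP]
      have hS0 : S 0 = ∑ i ∈ Finset.range n, (x i) ^ 2 +
          A * ∑ i ∈ Finset.range n, x i + B := by
        simp [hS]
      rw [hS0, h0, hJ, div_mul_cancel₀]
      rw [← h0]; exact hPnz 0
    | succ m ih =>
      have h1 : S (m + 1) * x m = x (m + n) * S m := by
        rw [hSm1 m, hSm m]; ring
      have h2 := hPm m
      have : S (m + 1) * x m = J * P (m + 1) * x m := by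
        rw [h1, ih]
        calc x (m + n) * (J * P m) = J * (P m * x (m + n)) := by ring
        _ = J * (P (m + 1) * x m) := by rw [h2]
        _ = J * P (m + 1) * x m := by ring
      exact mul_right_cancel₀ (hnz m) this
  intro m
  have h1 := hkey m
  simp only [hP] at h1
  rw [hSm m, prod_range_split n hn1 (fun i => x (m + i))] at h1
  simp only [Nat.add_zero] at h1
  have := mul_left_cancel₀ (hnz m) (by linear_combination h1 :
    x m * (x m + A + x (m + n)) = x m * (J * (∏ i ∈ Finset.Icc 1 (n - 1), x (m + i))))
  linear_combination this
end

section
/- Let n ≥ 2 be a natural number and A, B ∈ ℤ. Then there exists a sequence y : ℕ → ℤ such that y_m = 1 for all 0 ≤ m ≤ n−1, y_{m+n} = (n(1+A)+B)·∏_{i=1}^{n−1} y_{m+i} − y_m − A for all m ≥ 0, and for every m ≥ 0 the n-tuple (y_m, y_{m+1}, …, y_{m+n−1}) is an integer solution of the quadratic Diophantine equation ∑_{i=0}^{n−1} x_i² + A·∑_{i=0}^{n−1} x_i + B = (n(1+A)+B)·∏_{i=0}^{n−1} x_i. -/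
private def fseq (n : ℕ) (A B : ℤ) : ℕ → ℤ
  | m =>
    if h : m < n ∨ n = 0 then 1
    else ((n : ℤ) * (1 + A) + B) *
        ∏ i ∈ (Finset.Icc 1 (n - 1)).attach, fseq n A B (m - n + i.1)
      - fseq n A B (m - n) - A
  termination_by m => m
  decreasing_by
  · have hi := Finset.mem_Icc.mp i.2
    push_neg at h; omega
  · push_neg at h; omega

private lemma fseq_init (n : ℕ) (A B : ℤ) (m : ℕ) (hm : m < n) : fseq n A B m = 1 := by
  rw [fseq, dif_pos (Or.inl hm)]

private lemma fseq_rec (n : ℕ) (hn : 1 ≤ n) (A B : ℤ) (m : ℕ) :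
    fseq n A B (m + n) =
      ((n : ℤ) * (1 + A) + B) * (∏ i ∈ Finset.Icc 1 (n - 1), fseq n A B (m + i))
        - fseq n A B m - A := by
  rw [fseq, dif_neg (by omega)]
  rw [Finset.prod_attach (Finset.Icc 1 (n - 1)) (fun i => fseq n A B (m + n - n + i))]
  simp [Nat.add_sub_cancel]

private lemma sum_shift (g : ℕ → ℤ) (k m : ℕ) :
    ∑ i ∈ Finset.range (k + 1), g (m + 1 + i)
      = ∑ i ∈ Finset.range (k + 1), g (m + i) - g m + g (m + (k + 1)) := by
  rw [Finset.sum_range_succ (fun i => g (m + 1 + i)),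
      Finset.sum_range_succ' (fun i => g (m + i))]
  have h3 : ∑ i ∈ Finset.range k, g (m + (i + 1)) = ∑ i ∈ Finset.range k, g (m + 1 + i) :=
    Finset.sum_congr rfl (fun i _ => by congr 1; omega)
  rw [h3, show m + 1 + k = m + (k + 1) by omega, show m + 0 = m from rfl]
  abel

private lemma prod_left (g : ℕ → ℤ) (k m : ℕ) :
    ∏ i ∈ Finset.range (k + 1), g (m + i)
      = g m * ∏ i ∈ Finset.range k, g (m + 1 + i) := by
  rw [Finset.prod_range_succ' (fun i => g (m + i))]
  have h3 : ∏ i ∈ Finset.range k, g (m + (i + 1)) = ∏ i ∈ Finset.range k, g (m + 1 + i) :=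
    Finset.prod_congr rfl (fun i _ => by congr 1; omega)
  rw [h3, Nat.add_zero]
  exact mul_comm _ _

private lemma prod_right (g : ℕ → ℤ) (k m : ℕ) :
    ∏ i ∈ Finset.range (k + 1), g (m + 1 + i)
      = (∏ i ∈ Finset.range k, g (m + 1 + i)) * g (m + (k + 1)) := by
  rw [Finset.prod_range_succ]
  have h2 : m + 1 + k = m + (k + 1) := by omega
  rw [h2]

private lemma icc_prod (g : ℕ → ℤ) (k m : ℕ) :
    ∏ i ∈ Finset.Icc 1 k, g (m + i) = ∏ i ∈ Finset.range k, g (m + 1 + i) := by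
  rw [← Finset.Ico_add_one_right_eq_Icc, Finset.prod_Ico_eq_prod_range]
  apply Finset.prod_congr rfl
  intro i _
  congr 1
  omega

/-- End of Section 7.1: the all-ones initial values and the multilinearized recurrence
produce infinitely many integer solutions of the quadratic Diophantine equation
`∑ x_i² + A·∑ x_i + B = (n(1+A)+B)·∏ x_i`. -/
theorem stmt14 (n : ℕ) (hn : 2 ≤ n) (A B : ℤ) :
    ∃ y : ℕ → ℤ,
      (∀ m < n, y m = 1) ∧
      (∀ m, y (m + n) =
        ((n : ℤ) * (1 + A) + B) * (∏ i ∈ Finset.Icc 1 (n - 1), y (m + i)) - y m - A) ∧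
      (∀ m, (∑ i ∈ Finset.range n, (y (m + i)) ^ 2) +
          A * (∑ i ∈ Finset.range n, y (m + i)) + B =
        ((n : ℤ) * (1 + A) + B) * ∏ i ∈ Finset.range n, y (m + i)) := by
  have hn1 : 1 ≤ n := by omega
  obtain ⟨k, rfl⟩ : ∃ k, n = k + 1 := ⟨n - 1, by omega⟩
  set f := fseq (k + 1) A B with hf
  set C : ℤ := ((k + 1 : ℕ) : ℤ) * (1 + A) + B with hC
  refine ⟨f, fun m hm => fseq_init _ _ _ _ hm, fun m => fseq_rec _ hn1 _ _ _, ?_⟩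
  intro m
  induction m with
  | zero =>
    have h1 : ∀ i ∈ Finset.range (k + 1), f (0 + i) = 1 := by
      intro i hi
      exact fseq_init _ _ _ _ (by simpa using Finset.mem_range.mp hi)
    rw [Finset.prod_eq_one h1,
        show (∑ i ∈ Finset.range (k + 1), f (0 + i) ^ 2)
            = ∑ _i ∈ Finset.range (k + 1), (1 : ℤ) from
          Finset.sum_congr rfl (fun i hi => by rw [h1 i hi]; ring),
        show (∑ i ∈ Finset.range (k + 1), f (0 + i))
            = ∑ _i ∈ Finset.range (k + 1), (1 : ℤ) from Finset.sum_congr rfl h1]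
    simp [hC, Finset.sum_const]
    ring
  | succ m ih =>
    have hrec := fseq_rec (k + 1) hn1 A B m
    rw [icc_prod] at hrec
    rw [← hf] at hrec
    simp only [Nat.add_sub_cancel] at hrec
    set P : ℤ := ∏ i ∈ Finset.range k, f (m + 1 + i) with hP
    have hkey : f (m + (k + 1)) + f m + A = C * P := by
      rw [hrec, hC]; ring
    have hsum := sum_shift f k m
    have hsq := sum_shift (fun t => (f t) ^ 2) k m
    have hpl := prod_left f k m
    have hpr := prod_right f k m
    rw [hpr, hsq, hsum]
    rw [hpl] at ih
    simp only [← hP] at ih ⊢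
    linear_combination ih + (f (m + (k + 1)) - f m) * hkey
end

section
/- Let K be a field, let r ≥ 1 and n be integers with n ≥ 2r+1 and n ≡ 1 (mod r), let A ∈ K, and let x : ℕ → K be a sequence with x_m ≠ 0 for all m satisfying x_m · x_{m+n} = ∑_{i=0}^{(n−1)/r − 1} x_{m+ri+1}·x_{m+ri+r} + A for all m ≥ 0. Define J_m = (x_{m+1} + x_{m+n+r}) / ∏_{i=r+1}^{n} x_{m+i}. Then J_{m+1} = J_m for all m ≥ 0, i.e. J_m is a conserved quantity of the recurrence. -/
/-- Section 7.2: the conserved quantity for the recurrence generated by the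
r-Jumping polynomial `P = ∑_{i=0}^{(n−1)/r − 1} x_{ri+1}·x_{ri+r} + A`. -/
theorem stmt15 {K : Type*} [Field K] (n r : ℕ) (hr : 1 ≤ r) (hn : 2 * r + 1 ≤ n)
    (hmod : n % r = 1 % r) (A : K)
    (x : ℕ → K) (hnz : ∀ m, x m ≠ 0)
    (hrec : ∀ m, x m * x (m + n) =
      (∑ i ∈ Finset.range ((n - 1) / r), x (m + (r * i + 1)) * x (m + (r * i + r))) + A)
    (J : ℕ → K)
    (hJ : ∀ m, J m = (x (m + 1) + x (m + n + r)) / ∏ i ∈ Finset.Icc (r + 1) n, x (m + i)) :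
    ∀ m, J (m + 1) = J m := by
  intro m
  set k := (n - 1) / r with hk
  have hdvd : r ∣ n - 1 := (Nat.modEq_iff_dvd' (by omega)).mp (hmod.symm)
  have hrk : r * k = n - 1 := Nat.mul_div_cancel' hdvd
  have hrkn : r * k + 1 = n := by omega
  -- the terms of the sum shifted by one
  set g : ℕ → K := fun i => x (m + 1 + (r * i + 1)) * x (m + 1 + (r * i + r)) with hg
  have h1 := hrec (m + 1)
  have h2 := hrec (m + r + 1)
  have h1' : x (m + 1) * x (m + n + 1) = (∑ i ∈ Finset.range k, g i) + A := by
    have e : m + 1 + n = m + n + 1 := by omega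
    rw [← e]; exact h1
  have hshift : ∀ i, x (m + r + 1 + (r * i + 1)) * x (m + r + 1 + (r * i + r)) = g (i + 1) := by
    intro i
    have e1 : m + r + 1 + (r * i + 1) = m + 1 + (r * (i + 1) + 1) := by ring
    have e2 : m + r + 1 + (r * i + r) = m + 1 + (r * (i + 1) + r) := by ring
    rw [e1, e2]
  have htel : (∑ i ∈ Finset.range k, g (i + 1)) + g 0
      = (∑ i ∈ Finset.range k, g i) + g k := by
    rw [← Finset.sum_range_succ' g k, Finset.sum_range_succ]
  have hgk : g k = x (m + n + 1) * x (m + n + r) := by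
    have e1 : m + 1 + (r * k + 1) = m + n + 1 := by omega
    have e2 : m + 1 + (r * k + r) = m + n + r := by omega
    rw [hg]; dsimp only; rw [e1, e2]
  have hg0 : g 0 = x (m + 2) * x (m + r + 1) := by
    have e1 : m + 1 + (r * 0 + 1) = m + 2 := by ring
    have e2 : m + 1 + (r * 0 + r) = m + r + 1 := by ring
    rw [hg]; dsimp only; rw [e1, e2]
  have h2' : x (m + r + 1) * x (m + n + r + 1) = (∑ i ∈ Finset.range k, g (i + 1)) + A := by
    have e : m + r + 1 + n = m + n + r + 1 := by omega
    rw [← e]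
    rw [h2, Finset.sum_congr rfl fun i _ => hshift i]
  have key : x (m + r + 1) * (x (m + 2) + x (m + n + r + 1))
      = x (m + n + 1) * (x (m + 1) + x (m + n + r)) := by
    have := htel
    rw [hgk, hg0] at this
    linear_combination h2' - h1' + this
  -- products
  set P : K := ∏ i ∈ Finset.Icc (r + 2) n, x (m + i) with hP
  have hrn : r + 2 ≤ n := by omega
  have hprod1 : (∏ i ∈ Finset.Icc (r + 1) n, x (m + i)) = x (m + (r + 1)) * P := by
    rw [← Finset.Ico_add_one_right_eq_Icc, Finset.prod_eq_prod_Ico_succ_bot (by omega),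
      Finset.Ico_add_one_right_eq_Icc]
  have hprod2 : (∏ i ∈ Finset.Icc (r + 1) n, x (m + 1 + i)) = P * x (m + n + 1) := by
    have h := Finset.prod_Ico_add (fun j => x (m + j)) (r + 1) (n + 1) 1
    rw [← Finset.Ico_add_one_right_eq_Icc]
    calc (∏ i ∈ Finset.Ico (r + 1) (n + 1), x (m + 1 + i))
        = ∏ i ∈ Finset.Ico (r + 1) (n + 1), x (m + (1 + i)) := by
          apply Finset.prod_congr rfl; intro i _; rw [show m + 1 + i = m + (1 + i) by omega]
      _ = ∏ i ∈ Finset.Ico (r + 1 + 1) (n + 1 + 1), x (m + i) := h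
      _ = (∏ i ∈ Finset.Ico (r + 2) (n + 1), x (m + i)) * x (m + (n + 1)) := by
          rw [show r + 1 + 1 = r + 2 by omega, Finset.prod_Ico_succ_top (by omega)]
      _ = P * x (m + n + 1) := by
          rw [Finset.Ico_add_one_right_eq_Icc, ← hP, show m + (n + 1) = m + n + 1 by omega]
  have hPne : P ≠ 0 := Finset.prod_ne_zero_iff.mpr fun i _ => hnz _
  rw [hJ m, hJ (m + 1), hprod1]
  have hJ1num : x (m + 1 + 1) + x (m + 1 + n + r) = x (m + 2) + x (m + n + r + 1) := by
    rw [show m + 1 + 1 = m + 2 by omega, show m + 1 + n + r = m + n + r + 1 by omega]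
  rw [hJ1num, hprod2]
  rw [div_eq_div_iff (by exact mul_ne_zero hPne (hnz _)) (by exact mul_ne_zero (hnz _) hPne)]
  have e : m + (r + 1) = m + r + 1 := by omega
  rw [e]
  linear_combination P * key
end

section
/- Let K be a field, let n and k be integers with 0 < k < n, and let x : ℕ → K be a sequence with x_m ≠ 0 for all m satisfying x_m · x_{m+n} = x_{m+k}·x_{m+n−k} + 1 for all m ≥ 0. Define J_m = (x_m + x_{m+2k}) / x_{m+k}. Then J_{m+n−k} = J_m for all m ≥ 0; that is, J_m is an (n−k)-invariant of the recurrence, depending only on the residue of m modulo n−k. -/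
/-- Section 7.3: the `(n−k)`-invariant for the recurrence generated by the
sink-type binomial `P = x_k·x_{n−k} + 1`. -/
theorem stmt16 {K : Type*} [Field K] (n k : ℕ) (hk : 0 < k) (hkn : k < n)
    (x : ℕ → K) (hnz : ∀ m, x m ≠ 0)
    (hrec : ∀ m, x m * x (m + n) = x (m + k) * x (m + (n - k)) + 1)
    (J : ℕ → K)
    (hJ : ∀ m, J m = (x m + x (m + 2 * k)) / x (m + k)) :
    ∀ m, J (m + (n - k)) = J m := by
  intro m
  have h1 := hrec m
  have h2 := hrec (m + k)
  have e1 : m + k + (n - k) = m + n := by omega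
  have e2 : m + (n - k) + k = m + n := by omega
  have e3 : m + (n - k) + 2 * k = m + k + n := by omega
  have e4 : m + k + k = m + 2 * k := by omega
  rw [e1, e4] at h2
  rw [hJ, hJ, e2, e3, div_eq_div_iff (hnz _) (hnz _)]
  linear_combination h2 - h1
end

section
/- Let K be a field, n ≥ 2 a natural number, A, B ∈ K, and let x : ℕ → K be a sequence with x_m ≠ 0 for all m satisfying x_m · x_{m+n} = x_{m+1}·x_{m+n−1} + A·∑_{i=1}^{n−1} x_{m+i} + B for all m ≥ 0. Define J_m = (x_{m+2} + x_m + A) / x_{m+1}. Then J_{m+n−1} = J_m for all m ≥ 0; that is, J_m is an (n−1)-invariant of the recurrence, depending only on the residue of m modulo n−1. -/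
lemma sum_shift_aux {K : Type*} [Field K] (x : ℕ → K) (m k : ℕ) :
    ∑ i ∈ Finset.Icc 1 (k+1), x (m+1+i)
      = ∑ i ∈ Finset.Icc 1 (k+1), x (m+i) - x (m+1) + x (m+k+2) := by
  induction k with
  | zero => simp
  | succ k ih =>
      rw [Finset.sum_Icc_succ_top (f := fun i => x (m+1+i)) (by omega),
        Finset.sum_Icc_succ_top (f := fun i => x (m+i)) (by omega), ih,
        show m + 1 + (k+1+1) = m + (k+1) + 2 by ring, show m + (k+1+1) = m + k + 2 by ring]
      ring

/-- Section 7.4: the `(n−1)`-invariant for the recurrence generated by the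
extreme polynomial `P = x_1·x_{n−1} + A·∑ x_i + B`. -/
theorem stmt17 {K : Type*} [Field K] (n : ℕ) (hn : 2 ≤ n) (A B : K)
    (x : ℕ → K) (hnz : ∀ m, x m ≠ 0)
    (hrec : ∀ m, x m * x (m + n) =
      x (m + 1) * x (m + (n - 1)) + A * (∑ i ∈ Finset.Icc 1 (n - 1), x (m + i)) + B)
    (J : ℕ → K)
    (hJ : ∀ m, J m = (x (m + 2) + x m + A) / x (m + 1)) :
    ∀ m, J (m + (n - 1)) = J m := by
  obtain ⟨k, rfl⟩ : ∃ k, n = k + 2 := ⟨n - 2, by omega⟩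
  have hk : k + 2 - 1 = k + 1 := by omega
  intro m
  have h1 := hrec m
  have h2 := hrec (m + 1)
  rw [hk] at h1 h2 ⊢
  have hs := sum_shift_aux x m k
  rw [hJ, hJ, div_eq_div_iff (hnz _) (hnz _)]
  simp only [show m + 1 + (k+1) = m + (k+2) by omega, show m + 1 + 1 = m + 2 by omega,
    show m + k + 2 = m + (k+2) by omega, show m + (k+1) + 2 = m + 1 + (k+2) by omega,
    show m + (k+1) + 1 = m + (k+2) by omega] at h1 h2 hs ⊢
  linear_combination h2 - h1 + A * hs
end

section
/- Let K be a field, let n > 2 be an odd natural number, let A, B ∈ K, and let x : ℕ → K be a sequence with x_m ≠ 0 for all m satisfying x_m · x_{m+n} = ∑_{i=1}^{n−2} x_{m+i}·x_{m+i+1} + A·∑_{i=1}^{n−1} x_{m+i} + B for all m ≥ 0. Define J_m = (x_{m+n−1} + x_m + A) / ∏_{i=0}^{(n−3)/2} x_{m+2i+1}. Then J_{m+2} = J_m for all m ≥ 0; that is, J_m is a 2-invariant of the recurrence, depending only on the parity of m. -/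
open Finset

private lemma shiftsum18 {K : Type*} [Field K] (f : ℕ → K) (N : ℕ) :
    ∑ i ∈ Icc 1 N, f (i + 1) + f 1 = ∑ i ∈ Icc 1 N, f i + f (N + 1) := by
  induction N with
  | zero => simp
  | succ N ih =>
    rw [Finset.sum_Icc_succ_top (by omega), Finset.sum_Icc_succ_top (by omega : 1 ≤ N + 1)]
    linear_combination ih

/-- Section 7.5: the 2-invariant for the recurrence generated by the chain
polynomial `P = ∑ x_i·x_{i+1} + A·∑ x_i + B`, `n` odd. -/
theorem stmt18 {K : Type*} [Field K] (n : ℕ) (hn : 2 < n) (hodd : Odd n) (A B : K)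
    (x : ℕ → K) (hnz : ∀ m, x m ≠ 0)
    (hrec : ∀ m, x m * x (m + n) =
      (∑ i ∈ Finset.Icc 1 (n - 2), x (m + i) * x (m + i + 1)) +
        A * (∑ i ∈ Finset.Icc 1 (n - 1), x (m + i)) + B)
    (J : ℕ → K)
    (hJ : ∀ m, J m = (x (m + (n - 1)) + x m + A) /
      ∏ i ∈ Finset.range ((n - 3) / 2 + 1), x (m + 2 * i + 1)) :
    ∀ m, J (m + 2) = J m := by
  obtain ⟨j, hj⟩ := hodd
  obtain ⟨k, hk⟩ : ∃ k, n = 2 * k + 3 := ⟨j - 1, by omega⟩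
  subst hk
  intro m
  have h1 := hrec m
  have h2 := hrec (m + 1)
  rw [show 2 * k + 3 - 2 = 2 * k + 1 by omega, show 2 * k + 3 - 1 = 2 * k + 2 by omega] at h1 h2
  rw [show m + 1 + (2 * k + 3) = m + (2 * k + 4) by omega] at h2
  have hs2 : ∑ i ∈ Icc 1 (2 * k + 1), x (m + 1 + i) * x (m + 1 + i + 1)
      = ∑ i ∈ Icc 1 (2 * k + 1), x (m + (i + 1)) * x (m + (i + 1) + 1) :=
    Finset.sum_congr rfl fun i _ => by rw [show m + 1 + i = m + (i + 1) by omega]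
  have ht2 : ∑ i ∈ Icc 1 (2 * k + 2), x (m + 1 + i)
      = ∑ i ∈ Icc 1 (2 * k + 2), x (m + (i + 1)) :=
    Finset.sum_congr rfl fun i _ => by rw [show m + 1 + i = m + (i + 1) by omega]
  rw [hs2, ht2] at h2
  have A1 := shiftsum18 (fun i => x (m + i) * x (m + i + 1)) (2 * k + 1)
  have A2 := shiftsum18 (fun i => x (m + i)) (2 * k + 2)
  rw [show 2 * k + 1 + 1 = 2 * k + 2 by omega] at A1
  rw [show m + (2 * k + 2) + 1 = m + (2 * k + 3) by omega] at A1
  rw [show m + 1 + 1 = m + 2 by omega] at A1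
  rw [show 2 * k + 2 + 1 = 2 * k + 3 by omega] at A2
  have key : x (m + 1) * (x (m + (2 * k + 4)) + x (m + 2) + A)
      = x (m + (2 * k + 3)) * (x (m + (2 * k + 2)) + x m + A) := by
    linear_combination h2 + A1 + A * A2 - h1
  have hJm := hJ m
  have hJm2 := hJ (m + 2)
  rw [show (2 * k + 3 - 3) / 2 + 1 = k + 1 by omega,
      show 2 * k + 3 - 1 = 2 * k + 2 by omega] at hJm hJm2
  rw [show m + 2 + (2 * k + 2) = m + (2 * k + 4) by omega] at hJm2
  have hP : (∏ i ∈ range (k + 1), x (m + 2 + 2 * i + 1)) * x (m + 1)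
      = (∏ i ∈ range (k + 1), x (m + 2 * i + 1)) * x (m + (2 * k + 3)) := by
    rw [Finset.prod_range_succ, Finset.prod_range_succ']
    rw [show m + 2 + 2 * k + 1 = m + (2 * k + 3) by omega,
        show m + 2 * 0 + 1 = m + 1 by omega]
    rw [show (∏ i ∈ range k, x (m + 2 * (i + 1) + 1))
        = ∏ i ∈ range k, x (m + 2 + 2 * i + 1) from
      Finset.prod_congr rfl fun i _ => by rw [show m + 2 * (i + 1) + 1 = m + 2 + 2 * i + 1 by omega]]
    ring
  have hP1 : (∏ i ∈ range (k + 1), x (m + 2 * i + 1)) ≠ 0 :=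
    Finset.prod_ne_zero_iff.mpr fun i _ => hnz _
  have hP2 : (∏ i ∈ range (k + 1), x (m + 2 + 2 * i + 1)) ≠ 0 :=
    Finset.prod_ne_zero_iff.mpr fun i _ => hnz _
  rw [hJm2, hJm, div_eq_div_iff hP2 hP1]
  apply mul_left_cancel₀ (hnz (m + 1))
  linear_combination (∏ i ∈ range (k + 1), x (m + 2 * i + 1)) * key
    - (x (m + (2 * k + 2)) + x m + A) * hP
end

section
/- Let K be a field, let n > 2 be an odd natural number, let A, B ∈ K, and let x : ℕ → K be a sequence with x_m ≠ 0 for all m satisfying x_m · x_{m+n} = ∑_{1≤i<j≤n−1} x_{m+i}·x_{m+j} + A·∑_{i=1}^{n−1} x_{m+i} + B for all m ≥ 0. Define J_m = (∑_{i=0}^{n−1} x_{m+i} + A) / ∏_{i=0}^{(n−3)/2} x_{m+2i+1}. Then J_{m+2} = J_m for all m ≥ 0; that is, J_m is a 2-invariant of the recurrence, depending only on the parity of m. -/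
open Finset

/-- Section 7.6: the 2-invariant for the recurrence generated by the multilinear
symmetric polynomial `P = ∑_{i<j} x_i·x_j + A·∑ x_i + B`, `n` odd. -/
theorem stmt19 {K : Type*} [Field K] (n : ℕ) (hn : 2 < n) (hodd : Odd n) (A B : K)
    (x : ℕ → K) (hnz : ∀ m, x m ≠ 0)
    (hrec : ∀ m, x m * x (m + n) =
      (∑ i ∈ Finset.Icc 1 (n - 1), ∑ j ∈ Finset.Icc (i + 1) (n - 1),
          x (m + i) * x (m + j)) +
        A * (∑ i ∈ Finset.Icc 1 (n - 1), x (m + i)) + B)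
    (J : ℕ → K)
    (hJ : ∀ m, J m = ((∑ i ∈ Finset.range n, x (m + i)) + A) /
      ∏ i ∈ Finset.range ((n - 3) / 2 + 1), x (m + 2 * i + 1)) :
    ∀ m, J (m + 2) = J m := by
  obtain ⟨t, ht⟩ := hodd
  have hIcc : ∀ a : ℕ, Finset.Icc a (n - 1) = Finset.Ico a n := by
    intro a; rw [← Finset.Ico_add_one_right_eq_Icc]; congr 1; omega
  set k : ℕ := (n - 3) / 2 + 1 with hk
  have hkn : 2 * k + 1 = n := by omega
  clear_value k
  intro m
  set V : K := ∑ i ∈ Ico 2 n, x (m + i) with hV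
  set W : K := ∑ i ∈ Ico 2 n, ∑ j ∈ Ico (i + 1) n, x (m + i) * x (m + j) with hW
  -- the two range sums appearing in J
  have hS0 : ∑ i ∈ range n, x (m + i) = x m + (x (m + 1) + V) := by
    rw [range_eq_Ico, ← Finset.sum_Ico_consecutive _ (Nat.zero_le 2) (by omega : 2 ≤ n), ← hV]
    have : ∑ i ∈ Ico 0 2, x (m + i) = x m + x (m + 1) := by
      rw [← Finset.range_eq_Ico, Finset.sum_range_succ, Finset.sum_range_one, add_zero]
    rw [this]; ring
  have hS2 : ∑ i ∈ range n, x (m + 2 + i) = V + (x (m + n) + x (m + n + 1)) := by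
    have h1 : ∑ i ∈ range n, x (m + 2 + i) = ∑ i ∈ Ico 2 (n + 2), x (m + i) := by
      rw [range_eq_Ico]
      have := Finset.sum_Ico_add' (fun i => x (m + i)) 0 n 2
      rw [← this]
      exact Finset.sum_congr rfl fun i _ => by rw [show m + 2 + i = m + (i + 2) by omega]
    rw [h1, show n + 2 = (n + 1) + 1 by omega,
      Finset.sum_Ico_succ_top (by omega : 2 ≤ n + 1),
      Finset.sum_Ico_succ_top (by omega : 2 ≤ n), ← hV]
    ring
  -- recurrence at m, rewritten
  have hr0 : x m * x (m + n) = (x (m + 1) * V + W) + A * (x (m + 1) + V) + B := by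
    have h := hrec m
    have e2 : (∑ i ∈ Finset.Icc 1 (n - 1), ∑ j ∈ Finset.Icc (i + 1) (n - 1),
        x (m + i) * x (m + j)) = x (m + 1) * V + W := by
      rw [hIcc 1]
      rw [Finset.sum_congr rfl fun i (_ : i ∈ Ico 1 n) => by rw [hIcc (i + 1)]]
      rw [Finset.sum_eq_sum_Ico_succ_bot (by omega : 1 < n)]
      rw [hV, hW, Finset.mul_sum]
    have e1 : (∑ i ∈ Finset.Icc 1 (n - 1), x (m + i)) = x (m + 1) + V := by
      rw [hIcc 1, Finset.sum_eq_sum_Ico_succ_bot (by omega : 1 < n), hV]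
    rw [h, e1, e2]
  -- recurrence at m+1, rewritten
  have hr1 : x (m + 1) * x (m + n + 1) = (W + x (m + n) * V) + A * (V + x (m + n)) + B := by
    have h := hrec (m + 1)
    rw [hIcc 1, show m + 1 + n = m + n + 1 by omega] at h
    have e2 : (∑ i ∈ Ico 1 n, ∑ j ∈ Finset.Icc (i + 1) (n - 1),
        x (m + 1 + i) * x (m + 1 + j)) = W + x (m + n) * V := by
      have step1 : ∀ i ∈ Ico 1 n, (∑ j ∈ Finset.Icc (i + 1) (n - 1),
          x (m + 1 + i) * x (m + 1 + j))
          = ∑ j ∈ Ico (i + 1 + 1) (n + 1), x (m + (i + 1)) * x (m + j) := by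
        intro i _
        rw [hIcc (i + 1)]
        have := Finset.sum_Ico_add' (fun j => x (m + (i + 1)) * x (m + j)) (i + 1) n 1
        rw [← this]
        exact Finset.sum_congr rfl fun j _ => by
          rw [show m + 1 + i = m + (i + 1) by omega, show m + 1 + j = m + (j + 1) by omega]
      rw [Finset.sum_congr rfl step1]
      have shift2 : (∑ i ∈ Ico 1 n, ∑ j ∈ Ico (i + 1 + 1) (n + 1), x (m + (i + 1)) * x (m + j))
          = ∑ i ∈ Ico 2 (n + 1), ∑ j ∈ Ico (i + 1) (n + 1), x (m + i) * x (m + j) := by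
        have := Finset.sum_Ico_add'
          (fun i => ∑ j ∈ Ico (i + 1) (n + 1), x (m + i) * x (m + j)) 1 n 1
        simpa using this
      rw [shift2, Finset.sum_Ico_succ_top (by omega : 2 ≤ n)]
      have hempty : ∑ j ∈ Ico (n + 1) (n + 1), x (m + n) * x (m + j) = 0 := by simp
      rw [hempty, add_zero, hW, hV, Finset.mul_sum, ← Finset.sum_add_distrib]
      refine Finset.sum_congr rfl fun i hi => ?_
      rw [Finset.sum_Ico_succ_top (by simp at hi; omega : i + 1 ≤ n)]
      ring
    have e1 : (∑ i ∈ Ico 1 n, x (m + 1 + i)) = V + x (m + n) := by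
      have shift1 : (∑ i ∈ Ico 1 n, x (m + (i + 1))) = ∑ i ∈ Ico 2 (n + 1), x (m + i) := by
        have := Finset.sum_Ico_add' (fun i => x (m + i)) 1 n 1
        simpa using this
      rw [Finset.sum_congr rfl fun i (_ : i ∈ Ico 1 n) => by
        rw [show m + 1 + i = m + (i + 1) by omega]]
      rw [shift1, Finset.sum_Ico_succ_top (by omega : 2 ≤ n), hV]
    rw [h, e1, e2]
  -- key scalar identity
  have key1 : x (m + 1) * ((∑ i ∈ range n, x (m + 2 + i)) + A)
      = x (m + n) * ((∑ i ∈ range n, x (m + i)) + A) := by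
    rw [hS0, hS2]
    linear_combination hr1 - hr0
  -- key product identity
  have key2 : (∏ i ∈ range k, x (m + 2 + (2 * i + 1))) * x (m + 1)
      = (∏ i ∈ range k, x (m + 2 * i + 1)) * x (m + n) := by
    have l : ∏ i ∈ range (k + 1), x (m + 2 * i + 1)
        = (∏ i ∈ range k, x (m + 2 * (i + 1) + 1)) * x (m + 2 * 0 + 1) :=
      Finset.prod_range_succ' (fun i => x (m + 2 * i + 1)) k
    have r : ∏ i ∈ range (k + 1), x (m + 2 * i + 1)
        = (∏ i ∈ range k, x (m + 2 * i + 1)) * x (m + 2 * k + 1) :=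
      Finset.prod_range_succ (fun i => x (m + 2 * i + 1)) k
    have l' : (∏ i ∈ range k, x (m + 2 * (i + 1) + 1))
        = ∏ i ∈ range k, x (m + 2 + (2 * i + 1)) :=
      Finset.prod_congr rfl fun i _ => by rw [show m + 2 * (i + 1) + 1 = m + 2 + (2 * i + 1) by omega]
    have hx : x (m + 2 * 0 + 1) = x (m + 1) := by norm_num
    have hxn : x (m + 2 * k + 1) = x (m + n) := by rw [show m + 2 * k + 1 = m + n by omega]
    rw [l', hx] at l
    rw [hxn] at r
    rw [← l, r]
  -- assemble
  have hQ0 : (∏ i ∈ range k, x (m + 2 * i + 1)) ≠ 0 :=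
    Finset.prod_ne_zero_iff.mpr fun i _ => hnz _
  have hQ2 : (∏ i ∈ range k, x (m + 2 + 2 * i + 1)) ≠ 0 :=
    Finset.prod_ne_zero_iff.mpr fun i _ => hnz _
  rw [hJ, hJ, div_eq_div_iff hQ2 hQ0]
  have e : (∏ i ∈ range k, x (m + 2 + 2 * i + 1)) = ∏ i ∈ range k, x (m + 2 + (2 * i + 1)) :=
    Finset.prod_congr rfl fun i _ => by rw [show m + 2 + 2 * i + 1 = m + 2 + (2 * i + 1) by omega]
  rw [e]
  apply mul_left_cancel₀ (hnz (m + 1))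
  calc x (m + 1) * (((∑ i ∈ range n, x (m + 2 + i)) + A) * ∏ i ∈ range k, x (m + 2 * i + 1))
      = (x (m + 1) * ((∑ i ∈ range n, x (m + 2 + i)) + A)) * ∏ i ∈ range k, x (m + 2 * i + 1) := by
        ring
    _ = (x (m + n) * ((∑ i ∈ range n, x (m + i)) + A)) * ∏ i ∈ range k, x (m + 2 * i + 1) := by
        rw [key1]
    _ = ((∑ i ∈ range n, x (m + i)) + A) * ((∏ i ∈ range k, x (m + 2 * i + 1)) * x (m + n)) := by
        ring
    _ = ((∑ i ∈ range n, x (m + i)) + A) * ((∏ i ∈ range k, x (m + 2 + (2 * i + 1))) * x (m + 1)) := by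
        rw [← key2]
    _ = x (m + 1) * (((∑ i ∈ range n, x (m + i)) + A) * ∏ i ∈ range k, x (m + 2 + (2 * i + 1))) := by
        ring
end
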